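/- arXiv:2403.07629 — 2 statements merged into one kernel-verified Lean document; each statement's English description precedes it below -/
import Mathlib

section
/- For each odd n ≥ 1, write δ = (n−1)/2. In RLT_n, the number of ordered pairs (γ₁, γ₂), where γ₁ is a 3-cycle through vertex 0, γ₂ is a 5-cycle through vertex 0, and V(γ₁) ⊆ V(γ₂), equals (δ−1)δ(δ+1)(9δ−10)/8. -/
set_option maxHeartbeats 1000000

/-- The dominance relation of the regular locally transitive tournament `RLT_n`
on `ZMod n` (for odd `n`). -/
def rltAdj (n : ℕ) (i j : ZMod n) : Prop :=
  (j - i).val ∈ Finset.Icc 1 ((n - 1) / 2)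

/-- An `m`-cycle through the vertex `0`, recorded as the injective cyclic sequence of
its vertices based at `0` (so each such cycle is recorded exactly once). -/
def IsBasedCycleAtZero (n m : ℕ) [NeZero m] (v : Fin m → ZMod n) : Prop :=
  v 0 = 0 ∧ Function.Injective v ∧ ∀ k, rltAdj n (v k) (v (k + 1))

namespace RLTPf
open Finset


/-- Master polynomial summation lemma over an interval. -/
lemma sumPoly (a m : ℕ) (A B C D : ℤ) :
    12 * ∑ x ∈ Icc a (a+m), (A + B*((x:ℤ) - a) + C*((x:ℤ)-a)^2 + D*((x:ℤ)-a)^3)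
    = 12*((m:ℤ)+1)*A + 6*B*((m:ℤ)*(m+1)) + 2*C*((m:ℤ)*(m+1)*(2*m+1))
      + 3*D*((m:ℤ)^2*((m:ℤ)+1)^2) := by
  induction m with
  | zero => simp
  | succ k ih =>
    rw [show a + (k+1) = (a+k)+1 by ring, Finset.sum_Icc_succ_top (by omega)]
    push_cast
    push_cast at ih
    linear_combination ih

abbrev Tup : Type := ℕ × ℕ × ℕ × ℕ

def grid (d : ℕ) : Finset Tup :=
  Finset.range (2*d+1) ×ˢ Finset.range (2*d+1) ×ˢ Finset.range (2*d+1) ×ˢ Finset.range (2*d+1)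

def basePred (d : ℕ) (s : Tup) : Prop :=
  1 ≤ s.1 ∧ s.1 ≤ d ∧ s.1 < s.2.1 ∧ s.2.1 ≤ s.1 + d ∧ s.2.1 < s.2.2.1 ∧
  s.2.2.1 ≤ s.2.1 + d ∧ s.2.2.1 < s.2.2.2 ∧ s.2.2.2 ≤ s.2.2.1 + d ∧
  d+1 ≤ s.2.2.2 ∧ s.2.2.2 ≤ 2*d

instance (d : ℕ) (s : Tup) : Decidable (basePred d s) := by unfold basePred; infer_instance

def A12s (d : ℕ) : Finset Tup := (grid d).filter (fun s => basePred d s ∧ d+1 ≤ s.2.1)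
def A13s (d : ℕ) : Finset Tup := (grid d).filter (fun s => basePred d s ∧ d+1 ≤ s.2.2.1 ∧ s.2.2.1 ≤ s.1 + d)
def A14s (d : ℕ) : Finset Tup := (grid d).filter (fun s => basePred d s ∧ s.2.2.2 ≤ s.1 + d)
def A23s (d : ℕ) : Finset Tup := (grid d).filter (fun s => basePred d s ∧ s.2.1 ≤ d ∧ d+1 ≤ s.2.2.1)
def A24s (d : ℕ) : Finset Tup := (grid d).filter (fun s => basePred d s ∧ s.2.1 ≤ d ∧ s.2.2.2 ≤ s.2.1 + d)
def A34s (d : ℕ) : Finset Tup := (grid d).filter (fun s => basePred d s ∧ s.2.2.1 ≤ d)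
def Bs (d : ℕ) : Finset Tup := (grid d).filter (fun s =>
  1 ≤ s.1 ∧ s.1 ≤ d ∧ s.1 < s.2.1 ∧ s.2.1 ≤ s.1 + d ∧ 1 ≤ s.2.2.1 ∧
  s.2.2.1 + d + 1 ≤ s.2.1 ∧ s.2.2.1 < s.2.2.2 ∧ s.2.2.2 ≤ s.2.2.1 + d ∧
  d+1 ≤ s.2.2.2 ∧ s.2.2.2 ≤ 2*d)

/- sigma representations -/
def A12σ (d : ℕ) : Finset ((_ : ℕ) × (_ : ℕ) × (_ : ℕ) × ℕ) :=
  (Icc 1 d).sigma fun s1 => (Icc (d+1) (s1+d)).sigma fun s2 =>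
    (Icc (s2+1) (2*d-1)).sigma fun s3 => Icc (s3+1) (2*d)

def A13σ (d : ℕ) : Finset ((_ : ℕ) × (_ : ℕ) × (_ : ℕ) × ℕ) :=
  (Icc 1 d).sigma fun s1 => (Icc (d+1) (s1+d)).sigma fun s3 =>
    (Icc (s1+1) (s3-1)).sigma fun _s2 => Icc (s3+1) (2*d)

def Bσ (d : ℕ) : Finset ((_ : ℕ) × (_ : ℕ) × (_ : ℕ) × ℕ) :=
  (Icc 1 (d-1)).sigma fun s3 => (Icc (s3+1) d).sigma fun s1 =>
    (Icc (s3+d+1) (s1+d)).sigma fun _s2 => Icc (d+1) (s3+d)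

lemma A12_card (d : ℕ) : (A12s d).card = (A12σ d).card := by
  apply Finset.card_nbij' (i := fun s => ⟨s.1, s.2.1, s.2.2.1, s.2.2.2⟩)
    (j := fun x => (x.1, x.2.1, x.2.2.1, x.2.2.2))
  · intro a ha
    simp only [mem_coe] at ha ⊢
    simp only [A12s, mem_filter] at ha
    simp only [A12s, grid, basePred, mem_filter, mem_product, mem_range] at ha
    simp only [A12σ, mem_sigma, mem_Icc]
    omega
  · intro a ha
    simp only [mem_coe] at ha ⊢
    simp only [A12σ, mem_sigma, mem_Icc] at ha
    simp only [A12s, mem_filter]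
    simp only [A12s, grid, basePred, mem_filter, mem_product, mem_range]
    omega
  · intro a _; rfl
  · intro a _; rfl

lemma A13_card (d : ℕ) : (A13s d).card = (A13σ d).card := by
  apply Finset.card_nbij' (i := fun s => ⟨s.1, s.2.2.1, s.2.1, s.2.2.2⟩)
    (j := fun x => (x.1, x.2.2.1, x.2.1, x.2.2.2))
  · intro a ha
    simp only [mem_coe] at ha ⊢
    simp only [A13s, mem_filter] at ha
    simp only [A13s, grid, basePred, mem_filter, mem_product, mem_range] at ha
    simp only [A13σ, mem_sigma, mem_Icc]
    omega
  · intro a ha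
    simp only [mem_coe] at ha ⊢
    simp only [A13σ, mem_sigma, mem_Icc] at ha
    simp only [A13s, mem_filter]
    simp only [A13s, grid, basePred, mem_filter, mem_product, mem_range]
    omega
  · intro a _; rfl
  · intro a _; rfl

lemma B_card (d : ℕ) : (Bs d).card = (Bσ d).card := by
  apply Finset.card_nbij' (i := fun s => ⟨s.2.2.1, s.1, s.2.1, s.2.2.2⟩)
    (j := fun x => (x.2.1, x.2.2.1, x.1, x.2.2.2))
  · intro a ha
    simp only [mem_coe] at ha ⊢
    simp only [Bs, grid, mem_filter, mem_product, mem_range] at ha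
    simp only [Bσ, mem_sigma, mem_Icc]
    omega
  · intro a ha
    simp only [mem_coe] at ha ⊢
    simp only [Bσ, mem_sigma, mem_Icc] at ha
    simp only [Bs, grid, mem_filter, mem_product, mem_range]
    omega
  · intro a _; rfl
  · intro a _; rfl

/- bijections among classes -/
lemma A34_card (d : ℕ) : (A34s d).card = (A12s d).card := by
  apply Finset.card_nbij' (i := fun s => (2*d+1-s.2.2.2, 2*d+1-s.2.2.1, 2*d+1-s.2.1, 2*d+1-s.1))
    (j := fun s => (2*d+1-s.2.2.2, 2*d+1-s.2.2.1, 2*d+1-s.2.1, 2*d+1-s.1)) <;>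
  · intro a ha
    simp only [A34s, A12s, grid, basePred, mem_filter, mem_product, mem_range] at ha ⊢
    first
    | omega
    | (obtain ⟨a1, a2, a3, a4⟩ := a; simp_all; omega)

lemma A24_card (d : ℕ) : (A24s d).card = (A13s d).card := by
  apply Finset.card_nbij' (i := fun s => (2*d+1-s.2.2.2, 2*d+1-s.2.2.1, 2*d+1-s.2.1, 2*d+1-s.1))
    (j := fun s => (2*d+1-s.2.2.2, 2*d+1-s.2.2.1, 2*d+1-s.2.1, 2*d+1-s.1)) <;>
  · intro a ha
    simp only [A24s, A13s, grid, basePred, mem_filter, mem_product, mem_range] at ha ⊢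
    first
    | omega
    | (obtain ⟨a1, a2, a3, a4⟩ := a; simp_all; omega)

lemma A14_card (d : ℕ) : (A14s d).card = (A34s d).card := by
  apply Finset.card_nbij' (i := fun s => (s.2.1-s.1, s.2.2.1-s.1, s.2.2.2-s.1, 2*d+1-s.1))
    (j := fun t => (2*d+1-t.2.2.2, t.1+(2*d+1-t.2.2.2), t.2.1+(2*d+1-t.2.2.2), t.2.2.1+(2*d+1-t.2.2.2)))
  · intro a ha
    simp only [mem_coe] at ha ⊢
    simp only [A14s, A34s, mem_filter] at ha ⊢
    simp only [A14s, A34s, grid, basePred, mem_filter, mem_product, mem_range] at ha ⊢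
    omega
  · intro a ha
    simp only [mem_coe] at ha ⊢
    simp only [A14s, A34s, mem_filter] at ha ⊢
    simp only [A14s, A34s, grid, basePred, mem_filter, mem_product, mem_range] at ha ⊢
    omega
  · intro a ha
    simp only [A14s, grid, basePred, mem_filter, mem_product, mem_range] at ha
    obtain ⟨a1, a2, a3, a4⟩ := a; simp_all; omega
  · intro a ha
    simp only [A34s, grid, basePred, mem_filter, mem_product, mem_range] at ha
    obtain ⟨a1, a2, a3, a4⟩ := a; simp_all; omega

lemma A23_card (d : ℕ) : (A23s d).card = (A13s d).card := by
  apply Finset.card_nbij' (i := fun s => (s.2.2.1-s.2.1, s.2.2.1-s.1, s.2.2.1, s.2.2.1+(2*d+1)-s.2.2.2))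
    (j := fun t => (t.2.2.1-t.2.1, t.2.2.1-t.1, t.2.2.1, t.2.2.1+(2*d+1)-t.2.2.2))
  · intro a ha
    simp only [mem_coe] at ha ⊢
    simp only [A23s, A13s, mem_filter] at ha ⊢
    simp only [A23s, A13s, grid, basePred, mem_filter, mem_product, mem_range] at ha ⊢
    omega
  · intro a ha
    simp only [mem_coe] at ha ⊢
    simp only [A23s, A13s, mem_filter] at ha ⊢
    simp only [A23s, A13s, grid, basePred, mem_filter, mem_product, mem_range] at ha ⊢
    omega
  · intro a ha
    simp only [A23s, grid, basePred, mem_filter, mem_product, mem_range] at ha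
    obtain ⟨a1, a2, a3, a4⟩ := a; simp_all; omega
  · intro a ha
    simp only [A13s, grid, basePred, mem_filter, mem_product, mem_range] at ha
    obtain ⟨a1, a2, a3, a4⟩ := a; simp_all; omega

/- evaluations -/

lemma A12_val (d : ℕ) (hd : 1 ≤ d) :
    1728 * ((A12s d).card : ℤ) = 216*(d:ℤ)^4 - 432*(d:ℤ)^3 - 216*(d:ℤ)^2 + 432*(d:ℤ) := by
  have E1 : ∀ s2 : ℕ, s2 ≤ 2*d →
      12 * ∑ s3 ∈ Icc (s2+1) (2*d-1), ((Icc (s3+1) (2*d)).card : ℤ)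
      = 6*(2*(d:ℤ)-1-s2)*(2*(d:ℤ)-s2) := by
    intro s2 hs2
    have h1 : ∀ x ∈ Icc (s2+1) (2*d-1), ((Icc (x+1) (2*d)).card : ℤ)
        = (2*(d:ℤ)-s2-1) + (-1)*((x:ℤ) - (s2+1)) + 0*((x:ℤ)-(s2+1))^2 + 0*((x:ℤ)-(s2+1))^3 := by
      intro x hx; simp only [mem_Icc] at hx; rw [Nat.card_Icc]; push_cast; omega
    rw [Finset.sum_congr rfl h1]
    by_cases h : s2 + 2 ≤ 2*d
    · rw [show 2*d-1 = (s2+1)+(2*d-2-s2) by omega]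
      have sp := sumPoly (s2+1) (2*d-2-s2) (2*(d:ℤ)-s2-1) (-1) 0 0
      have hm : ((2*d-2-s2 : ℕ) : ℤ) = 2*(d:ℤ)-2-s2 := by omega
      rw [hm] at sp
      push_cast at sp ⊢
      linear_combination sp
    · rw [Finset.Icc_eq_empty (by omega)]
      simp only [sum_empty, mul_zero]
      have : (s2:ℤ) = 2*(d:ℤ)-1 ∨ (s2:ℤ) = 2*(d:ℤ) := by omega
      rcases this with h' | h' <;> rw [h'] <;> ring
  have E2 : ∀ s1 : ℕ, 1 ≤ s1 →
      12 * ∑ s2 ∈ Icc (d+1) (s1+d), (6*(2*(d:ℤ)-1-s2)*(2*(d:ℤ)-s2))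
      = 72*(s1:ℤ)*((d:ℤ)-2)*((d:ℤ)-1) - 36*(2*(d:ℤ)-3)*((s1:ℤ)-1)*s1
        + 12*((s1:ℤ)-1)*s1*(2*(s1:ℤ)-1) := by
    intro s1 hs1
    have h1 : ∀ x ∈ Icc (d+1) (s1+d), (6*(2*(d:ℤ)-1-x)*(2*(d:ℤ)-x))
        = (6*((d:ℤ)-2)*((d:ℤ)-1)) + (-6*(2*(d:ℤ)-3))*((x:ℤ) - (d+1))
          + 6*((x:ℤ)-(d+1))^2 + 0*((x:ℤ)-(d+1))^3 := by
      intro x _; push_cast; ring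
    rw [Finset.sum_congr rfl h1]
    rw [show s1+d = (d+1)+(s1-1) by omega]
    have sp := sumPoly (d+1) (s1-1) (6*((d:ℤ)-2)*((d:ℤ)-1)) (-6*(2*(d:ℤ)-3)) 6 0
    have hm : ((s1-1 : ℕ) : ℤ) = (s1:ℤ)-1 := by omega
    rw [hm] at sp
    push_cast at sp ⊢
    linear_combination sp
  rw [A12_card]
  unfold A12σ
  rw [Finset.card_sigma]
  simp only [Finset.card_sigma]
  push_cast
  rw [show (1728:ℤ) = 12*144 by norm_num, mul_assoc, Finset.mul_sum]
  have step1 : ∀ s1 ∈ Icc 1 d,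
      (144:ℤ) * ∑ s2 ∈ Icc (d+1) (s1+d), ∑ s3 ∈ Icc (s2+1) (2*d-1), ((Icc (s3+1) (2*d)).card : ℤ)
      = 72*(s1:ℤ)*((d:ℤ)-2)*((d:ℤ)-1) - 36*(2*(d:ℤ)-3)*((s1:ℤ)-1)*s1
        + 12*((s1:ℤ)-1)*s1*(2*(s1:ℤ)-1) := by
    intro s1 hs1
    simp only [mem_Icc] at hs1
    rw [show (144:ℤ) = 12*12 by norm_num, mul_assoc, Finset.mul_sum]
    rw [Finset.sum_congr rfl (fun s2 hs2 => E1 s2 (by simp only [mem_Icc] at hs2; omega))]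
    exact E2 s1 hs1.1
  rw [Finset.sum_congr rfl step1]
  have e : Icc 1 d = Icc 1 (1+(d-1)) := by congr 1; omega
  rw [e]
  have h1 : ∀ x ∈ Icc 1 (1+(d-1)),
      72*(x:ℤ)*((d:ℤ)-2)*((d:ℤ)-1) - 36*(2*(d:ℤ)-3)*((x:ℤ)-1)*x + 12*((x:ℤ)-1)*x*(2*(x:ℤ)-1)
      = (144 - 216*(d:ℤ) + 72*(d:ℤ)^2) + (264 - 288*(d:ℤ) + 72*(d:ℤ)^2)*((x:ℤ) - 1)
        + (144 - 72*(d:ℤ))*((x:ℤ)-1)^2 + 24*((x:ℤ)-1)^3 := by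
    intro x _; push_cast; ring
  rw [Finset.sum_congr rfl h1]
  have sp := sumPoly 1 (d-1) (144 - 216*(d:ℤ) + 72*(d:ℤ)^2) (264 - 288*(d:ℤ) + 72*(d:ℤ)^2)
    (144 - 72*(d:ℤ)) 24
  have hm : ((d-1 : ℕ) : ℤ) = (d:ℤ)-1 := by omega
  rw [hm] at sp
  push_cast at sp ⊢
  linear_combination sp


lemma A13_val (d : ℕ) (hd : 1 ≤ d) :
    1728 * ((A13s d).card : ℤ) = 360*(d:ℤ)^4 - 432*(d:ℤ)^3 - 360*(d:ℤ)^2 + 432*(d:ℤ) := by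
  have E1 : ∀ s1 : ℕ, 1 ≤ s1 → s1 ≤ d →
      12 * ∑ s3 ∈ Icc (d+1) (s1+d), (12 * (((Icc (s1+1) (s3-1)).card : ℤ) * ((Icc (s3+1) (2*d)).card : ℤ)))
      = 12*(12*(s1:ℤ)*((d:ℤ)-s1)*((d:ℤ)-1) + 6*((s1:ℤ)-1)*((s1:ℤ)-1)*s1
        - 2*((s1:ℤ)-1)*s1*(2*(s1:ℤ)-1)) := by
    intro s1 hs1 hs1d
    have h1 : ∀ x ∈ Icc (d+1) (s1+d),
        (12:ℤ) * (((Icc (s1+1) (x-1)).card : ℤ) * ((Icc (x+1) (2*d)).card : ℤ))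
        = (12*((d:ℤ)-s1)*((d:ℤ)-1)) + (12*((s1:ℤ)-1))*((x:ℤ) - (d+1))
          + (-12)*((x:ℤ)-(d+1))^2 + 0*((x:ℤ)-(d+1))^3 := by
      intro x hx; simp only [mem_Icc] at hx
      rw [Nat.card_Icc, Nat.card_Icc]
      have c1 : ((x-1+1-(s1+1) : ℕ) : ℤ) = (x:ℤ) - s1 - 1 := by omega
      have c2 : ((2*d+1-(x+1) : ℕ) : ℤ) = 2*(d:ℤ) - x := by omega
      rw [c1, c2]; push_cast; ring
    rw [Finset.sum_congr rfl h1]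
    have e : Icc (d+1) (s1+d) = Icc (d+1) ((d+1)+(s1-1)) := by congr 1; omega
    rw [e]
    have sp := sumPoly (d+1) (s1-1) (12*((d:ℤ)-s1)*((d:ℤ)-1)) (12*((s1:ℤ)-1)) (-12) 0
    have hm : ((s1-1 : ℕ) : ℤ) = (s1:ℤ)-1 := by omega
    rw [hm] at sp
    push_cast at sp ⊢
    linear_combination sp
  rw [A13_card]
  unfold A13σ
  rw [Finset.card_sigma]
  simp only [Finset.card_sigma]
  push_cast
  rw [show (1728:ℤ) = 12*144 by norm_num, mul_assoc, Finset.mul_sum]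
  have step1 : ∀ s1 ∈ Icc 1 d,
      (144:ℤ) * ∑ s3 ∈ Icc (d+1) (s1+d), ∑ _s2 ∈ Icc (s1+1) (s3-1), ((Icc (s3+1) (2*d)).card : ℤ)
      = 12*(12*(s1:ℤ)*((d:ℤ)-s1)*((d:ℤ)-1) + 6*((s1:ℤ)-1)*((s1:ℤ)-1)*s1
        - 2*((s1:ℤ)-1)*s1*(2*(s1:ℤ)-1)) := by
    intro s1 hs1
    simp only [mem_Icc] at hs1
    rw [show (144:ℤ) = 12*12 by norm_num, mul_assoc, Finset.mul_sum]
    have inner : ∀ s3 ∈ Icc (d+1) (s1+d),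
        (12:ℤ) * ∑ _s2 ∈ Icc (s1+1) (s3-1), ((Icc (s3+1) (2*d)).card : ℤ)
        = 12 * (((Icc (s1+1) (s3-1)).card : ℤ) * ((Icc (s3+1) (2*d)).card : ℤ)) := by
      intro s3 _
      rw [Finset.sum_const, nsmul_eq_mul]
    rw [Finset.sum_congr rfl inner]
    exact E1 s1 hs1.1 hs1.2
  rw [Finset.sum_congr rfl step1]
  have e : Icc 1 d = Icc 1 (1+(d-1)) := by congr 1; omega
  rw [e]
  have h1 : ∀ x ∈ Icc 1 (1+(d-1)),
      (12:ℤ)*(12*(x:ℤ)*((d:ℤ)-x)*((d:ℤ)-1) + 6*((x:ℤ)-1)*((x:ℤ)-1)*x - 2*((x:ℤ)-1)*x*(2*(x:ℤ)-1))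
      = (144*(d:ℤ)^2 - 288*(d:ℤ) + 144) + (144*(d:ℤ)^2 - 432*(d:ℤ) + 264)*((x:ℤ) - 1)
        + (144 - 144*(d:ℤ))*((x:ℤ)-1)^2 + 24*((x:ℤ)-1)^3 := by
    intro x _; push_cast; ring
  rw [Finset.sum_congr rfl h1]
  have sp := sumPoly 1 (d-1) (144*(d:ℤ)^2 - 288*(d:ℤ) + 144) (144*(d:ℤ)^2 - 432*(d:ℤ) + 264)
    (144 - 144*(d:ℤ)) 24
  have hm : ((d-1 : ℕ) : ℤ) = (d:ℤ)-1 := by omega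
  rw [hm] at sp
  push_cast at sp ⊢
  linear_combination sp

lemma B_val (d : ℕ) (hd : 2 ≤ d) :
    1728 * ((Bs d).card : ℤ) = 72*(d:ℤ)^4 + 144*(d:ℤ)^3 - 72*(d:ℤ)^2 - 144*(d:ℤ) := by
  have E1 : ∀ s3 : ℕ, 1 ≤ s3 → s3 ≤ d-1 →
      12 * ∑ s1 ∈ Icc (s3+1) d, (12 * (((Icc (s3+d+1) (s1+d)).card : ℤ) * ((Icc (d+1) (s3+d)).card : ℤ)))
      = 12*(12*((d:ℤ)-s3)*s3 + 6*(s3:ℤ)*((d:ℤ)-1-s3)*((d:ℤ)-s3)) := by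
    intro s3 hs3 hs3d
    have h1 : ∀ x ∈ Icc (s3+1) d,
        (12:ℤ) * (((Icc (s3+d+1) (x+d)).card : ℤ) * ((Icc (d+1) (s3+d)).card : ℤ))
        = (12*(s3:ℤ)) + (12*(s3:ℤ))*((x:ℤ) - (s3+1)) + 0*((x:ℤ)-(s3+1))^2 + 0*((x:ℤ)-(s3+1))^3 := by
      intro x hx; simp only [mem_Icc] at hx
      rw [Nat.card_Icc, Nat.card_Icc]
      have c1 : ((x+d+1-(s3+d+1) : ℕ) : ℤ) = (x:ℤ) - s3 := by omega
      have c2 : ((s3+d+1-(d+1) : ℕ) : ℤ) = (s3:ℤ) := by omega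
      rw [c1, c2]; push_cast; ring
    rw [Finset.sum_congr rfl h1]
    have e : Icc (s3+1) d = Icc (s3+1) ((s3+1)+(d-1-s3)) := by congr 1; omega
    rw [e]
    have sp := sumPoly (s3+1) (d-1-s3) (12*(s3:ℤ)) (12*(s3:ℤ)) 0 0
    have hm : ((d-1-s3 : ℕ) : ℤ) = (d:ℤ)-1-s3 := by omega
    rw [hm] at sp
    push_cast at sp ⊢
    linear_combination sp
  rw [B_card]
  unfold Bσ
  rw [Finset.card_sigma]
  simp only [Finset.card_sigma]
  push_cast
  rw [show (1728:ℤ) = 12*144 by norm_num, mul_assoc, Finset.mul_sum]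
  have step1 : ∀ s3 ∈ Icc 1 (d-1),
      (144:ℤ) * ∑ s1 ∈ Icc (s3+1) d, ∑ _s2 ∈ Icc (s3+d+1) (s1+d), ((Icc (d+1) (s3+d)).card : ℤ)
      = 12*(12*((d:ℤ)-s3)*s3 + 6*(s3:ℤ)*((d:ℤ)-1-s3)*((d:ℤ)-s3)) := by
    intro s3 hs3
    simp only [mem_Icc] at hs3
    rw [show (144:ℤ) = 12*12 by norm_num, mul_assoc, Finset.mul_sum]
    have inner : ∀ s1 ∈ Icc (s3+1) d,
        (12:ℤ) * ∑ _s2 ∈ Icc (s3+d+1) (s1+d), ((Icc (d+1) (s3+d)).card : ℤ)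
        = 12 * (((Icc (s3+d+1) (s1+d)).card : ℤ) * ((Icc (d+1) (s3+d)).card : ℤ)) := by
      intro s1 _
      rw [Finset.sum_const, nsmul_eq_mul]
    rw [Finset.sum_congr rfl inner]
    exact E1 s3 hs3.1 hs3.2
  rw [Finset.sum_congr rfl step1]
  have e : Icc 1 (d-1) = Icc 1 (1+(d-2)) := by congr 1; omega
  rw [e]
  have h1 : ∀ x ∈ Icc 1 (1+(d-2)),
      (12:ℤ)*(12*((d:ℤ)-x)*x + 6*(x:ℤ)*((d:ℤ)-1-x)*((d:ℤ)-x))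
      = (72*(d:ℤ)^2 - 72*(d:ℤ)) + (72*(d:ℤ)^2 - 216*(d:ℤ) + 72)*((x:ℤ) - 1)
        + (144 - 144*(d:ℤ))*((x:ℤ)-1)^2 + 72*((x:ℤ)-1)^3 := by
    intro x _; push_cast; ring
  rw [Finset.sum_congr rfl h1]
  have sp := sumPoly 1 (d-2) (72*(d:ℤ)^2 - 72*(d:ℤ)) (72*(d:ℤ)^2 - 216*(d:ℤ) + 72)
    (144 - 144*(d:ℤ)) 72
  have hm : ((d-2 : ℕ) : ℤ) = (d:ℤ)-2 := by omega
  rw [hm] at sp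
  push_cast at sp ⊢
  linear_combination sp

def Rrel (d a b : ℕ) : Prop := (a < b ∧ b ≤ a + d) ∨ (b < a ∧ b + d + 1 ≤ a)
instance (d a b : ℕ) : Decidable (Rrel d a b) := by unfold Rrel; infer_instance

def P5 (d : ℕ) (s : Tup) : Prop :=
  Rrel d 0 s.1 ∧ Rrel d s.1 s.2.1 ∧ Rrel d s.2.1 s.2.2.1 ∧ Rrel d s.2.2.1 s.2.2.2 ∧
  Rrel d s.2.2.2 0 ∧ 1 ≤ s.2.1 ∧ 1 ≤ s.2.2.1 ∧
  s.1 ≠ s.2.1 ∧ s.1 ≠ s.2.2.1 ∧ s.1 ≠ s.2.2.2 ∧ s.2.1 ≠ s.2.2.1 ∧ s.2.1 ≠ s.2.2.2 ∧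
  s.2.2.1 ≠ s.2.2.2
instance (d : ℕ) (s : Tup) : Decidable (P5 d s) := by unfold P5; infer_instance

def tri (d u v : ℕ) : Prop := u ≤ d ∧ d+1 ≤ v ∧ v ≤ u + d
instance (d u v : ℕ) : Decidable (tri d u v) := by unfold tri; infer_instance

def cd (s : Tup) : Fin 4 → ℕ := ![s.1, s.2.1, s.2.2.1, s.2.2.2]
@[simp] lemma cd0 (s : Tup) : cd s 0 = s.1 := rfl
@[simp] lemma cd1 (s : Tup) : cd s 1 = s.2.1 := rfl
@[simp] lemma cd2 (s : Tup) : cd s 2 = s.2.2.1 := rfl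
@[simp] lemma cd3 (s : Tup) : cd s 3 = s.2.2.2 := rfl

def Om (d : ℕ) : Finset (Tup × (Fin 4 × Fin 4)) :=
  ((grid d) ×ˢ (Finset.univ : Finset (Fin 4 × Fin 4))).filter
    (fun x => P5 d x.1 ∧ tri d (cd x.1 x.2.1) (cd x.1 x.2.2))

def Sfin (d : ℕ) (i j : Fin 4) : Finset Tup :=
  (grid d).filter (fun s => P5 d s ∧ tri d (cd s i) (cd s j))

lemma fiber_card (d : ℕ) (i j : Fin 4) :
    ((Om d).filter (fun x => x.snd = (i, j))).card = (Sfin d i j).card := by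
  apply Finset.card_nbij' (i := fun x => x.1) (j := fun s => (s, (i, j)))
  · intro a ha
    simp only [mem_coe] at ha ⊢
    simp only [Om, mem_filter, mem_product, mem_univ, and_true] at ha
    obtain ⟨⟨h1, h2, h3⟩, h4⟩ := ha
    rw [h4] at h3
    simp only [Sfin, mem_filter]
    exact ⟨h1, h2, h3⟩
  · intro a ha
    simp only [mem_coe] at ha ⊢
    simp only [Sfin, mem_filter] at ha
    unfold Om
    exact Finset.mem_filter.mpr ⟨Finset.mem_filter.mpr
      ⟨Finset.mem_product.mpr ⟨ha.1, mem_univ _⟩, ha.2.1, ha.2.2⟩, rfl⟩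
  · intro a ha
    simp only [mem_coe] at ha ⊢
    simp only [mem_filter] at ha
    exact (Prod.ext rfl ha.2.symm)
  · intro a _; rfl

lemma Sfin_00 (d : ℕ) : (Sfin d 0 0).card = 0 := by
  rw [Finset.card_eq_zero]
  unfold Sfin
  rw [Finset.filter_eq_empty_iff]
  intro s _
  simp only [P5, Rrel, tri, cd0, cd1, cd2, cd3, not_and]
  intro h
  omega

lemma Sfin_11 (d : ℕ) : (Sfin d 1 1).card = 0 := by
  rw [Finset.card_eq_zero]
  unfold Sfin
  rw [Finset.filter_eq_empty_iff]
  intro s _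
  simp only [P5, Rrel, tri, cd0, cd1, cd2, cd3, not_and]
  intro h
  omega

lemma Sfin_22 (d : ℕ) : (Sfin d 2 2).card = 0 := by
  rw [Finset.card_eq_zero]
  unfold Sfin
  rw [Finset.filter_eq_empty_iff]
  intro s _
  simp only [P5, Rrel, tri, cd0, cd1, cd2, cd3, not_and]
  intro h
  omega

lemma Sfin_33 (d : ℕ) : (Sfin d 3 3).card = 0 := by
  rw [Finset.card_eq_zero]
  unfold Sfin
  rw [Finset.filter_eq_empty_iff]
  intro s _
  simp only [P5, Rrel, tri, cd0, cd1, cd2, cd3, not_and]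
  intro h
  omega

lemma Sfin_10 (d : ℕ) : (Sfin d 1 0).card = 0 := by
  rw [Finset.card_eq_zero]
  unfold Sfin
  rw [Finset.filter_eq_empty_iff]
  intro s _
  simp only [P5, Rrel, tri, cd0, cd1, cd2, cd3, not_and]
  intro h
  omega

lemma Sfin_20 (d : ℕ) : (Sfin d 2 0).card = 0 := by
  rw [Finset.card_eq_zero]
  unfold Sfin
  rw [Finset.filter_eq_empty_iff]
  intro s _
  simp only [P5, Rrel, tri, cd0, cd1, cd2, cd3, not_and]
  intro h
  omega

lemma Sfin_30 (d : ℕ) : (Sfin d 3 0).card = 0 := by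
  rw [Finset.card_eq_zero]
  unfold Sfin
  rw [Finset.filter_eq_empty_iff]
  intro s _
  simp only [P5, Rrel, tri, cd0, cd1, cd2, cd3, not_and]
  intro h
  omega

lemma Sfin_21 (d : ℕ) : (Sfin d 2 1).card = 0 := by
  rw [Finset.card_eq_zero]
  unfold Sfin
  rw [Finset.filter_eq_empty_iff]
  intro s _
  simp only [P5, Rrel, tri, cd0, cd1, cd2, cd3, not_and]
  intro h
  omega

lemma Sfin_31 (d : ℕ) : (Sfin d 3 1).card = 0 := by
  rw [Finset.card_eq_zero]
  unfold Sfin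
  rw [Finset.filter_eq_empty_iff]
  intro s _
  simp only [P5, Rrel, tri, cd0, cd1, cd2, cd3, not_and]
  intro h
  omega

lemma Sfin_32 (d : ℕ) : (Sfin d 3 2).card = 0 := by
  rw [Finset.card_eq_zero]
  unfold Sfin
  rw [Finset.filter_eq_empty_iff]
  intro s _
  simp only [P5, Rrel, tri, cd0, cd1, cd2, cd3, not_and]
  intro h
  omega

lemma Sfin_01 (d : ℕ) : (Sfin d 0 1).card = (A12s d).card + (Bs d).card := by
  have h1 : Finset.filter (fun s : Tup => s.2.1 < s.2.2.1) (Sfin d 0 1) = A12s d := by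
    unfold Sfin A12s
    rw [Finset.filter_filter]
    apply Finset.filter_congr
    intro s hs
    simp only [grid, mem_product, mem_range] at hs
    simp only [P5, Rrel, tri, basePred, cd0, cd1, cd2, cd3]
    omega
  have h2 : Finset.filter (fun s : Tup => ¬ s.2.1 < s.2.2.1) (Sfin d 0 1) = Bs d := by
    unfold Sfin Bs
    rw [Finset.filter_filter]
    apply Finset.filter_congr
    intro s hs
    simp only [grid, mem_product, mem_range] at hs
    simp only [P5, Rrel, tri, cd0, cd1, cd2, cd3]
    omega
  rw [← Finset.card_filter_add_card_filter_not
    (p := fun s : Tup => s.2.1 < s.2.2.1) (s := Sfin d 0 1), h1, h2]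

lemma Sfin_03 (d : ℕ) : (Sfin d 0 3).card = (A14s d).card + (Bs d).card := by
  have h1 : Finset.filter (fun s : Tup => s.2.1 < s.2.2.1) (Sfin d 0 3) = A14s d := by
    unfold Sfin A14s
    rw [Finset.filter_filter]
    apply Finset.filter_congr
    intro s hs
    simp only [grid, mem_product, mem_range] at hs
    simp only [P5, Rrel, tri, basePred, cd0, cd1, cd2, cd3]
    omega
  have h2 : Finset.filter (fun s : Tup => ¬ s.2.1 < s.2.2.1) (Sfin d 0 3) = Bs d := by
    unfold Sfin Bs
    rw [Finset.filter_filter]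
    apply Finset.filter_congr
    intro s hs
    simp only [grid, mem_product, mem_range] at hs
    simp only [P5, Rrel, tri, cd0, cd1, cd2, cd3]
    omega
  rw [← Finset.card_filter_add_card_filter_not
    (p := fun s : Tup => s.2.1 < s.2.2.1) (s := Sfin d 0 3), h1, h2]

lemma Sfin_23 (d : ℕ) : (Sfin d 2 3).card = (A34s d).card + (Bs d).card := by
  have h1 : Finset.filter (fun s : Tup => s.2.1 < s.2.2.1) (Sfin d 2 3) = A34s d := by
    unfold Sfin A34s
    rw [Finset.filter_filter]
    apply Finset.filter_congr
    intro s hs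
    simp only [grid, mem_product, mem_range] at hs
    simp only [P5, Rrel, tri, basePred, cd0, cd1, cd2, cd3]
    omega
  have h2 : Finset.filter (fun s : Tup => ¬ s.2.1 < s.2.2.1) (Sfin d 2 3) = Bs d := by
    unfold Sfin Bs
    rw [Finset.filter_filter]
    apply Finset.filter_congr
    intro s hs
    simp only [grid, mem_product, mem_range] at hs
    simp only [P5, Rrel, tri, cd0, cd1, cd2, cd3]
    omega
  rw [← Finset.card_filter_add_card_filter_not
    (p := fun s : Tup => s.2.1 < s.2.2.1) (s := Sfin d 2 3), h1, h2]

lemma Sfin_02 (d : ℕ) : (Sfin d 0 2).card = (A13s d).card := by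
  unfold Sfin A13s
  congr 1
  apply Finset.filter_congr
  intro s hs
  simp only [grid, mem_product, mem_range] at hs
  simp only [P5, Rrel, tri, basePred, cd0, cd1, cd2, cd3]
  omega

lemma Sfin_12 (d : ℕ) : (Sfin d 1 2).card = (A23s d).card := by
  unfold Sfin A23s
  congr 1
  apply Finset.filter_congr
  intro s hs
  simp only [grid, mem_product, mem_range] at hs
  simp only [P5, Rrel, tri, basePred, cd0, cd1, cd2, cd3]
  omega

lemma Sfin_13 (d : ℕ) : (Sfin d 1 3).card = (A24s d).card := by
  unfold Sfin A24s
  congr 1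
  apply Finset.filter_congr
  intro s hs
  simp only [grid, mem_product, mem_range] at hs
  simp only [P5, Rrel, tri, basePred, cd0, cd1, cd2, cd3]
  omega

lemma Om_card (d : ℕ) :
    (Om d).card = ((A12s d).card + (A14s d).card + (A34s d).card)
      + ((A13s d).card + (A23s d).card + (A24s d).card) + 3*(Bs d).card := by
  rw [Finset.card_eq_sum_card_fiberwise (f := fun x => x.snd)
    (t := (Finset.univ : Finset (Fin 4 × Fin 4))) (fun x _ => mem_univ _)]
  rw [show (∑ b ∈ (Finset.univ : Finset (Fin 4 × Fin 4)),
      ((Om d).filter (fun x => x.snd = b)).card)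
    = ∑ b ∈ (Finset.univ : Finset (Fin 4 × Fin 4)), (Sfin d b.1 b.2).card from
    Finset.sum_congr rfl (fun b _ => by rw [← fiber_card d b.1 b.2])]
  rw [Fintype.sum_prod_type]
  simp only [Fin.sum_univ_four]
  rw [Sfin_00, Sfin_01, Sfin_02, Sfin_03, Sfin_10, Sfin_11, Sfin_12, Sfin_13,
    Sfin_20, Sfin_21, Sfin_22, Sfin_23, Sfin_30, Sfin_31, Sfin_32, Sfin_33]
  ring

/-! ZMod part -/

lemma val_natCast' (d m : ℕ) (h : m ≤ 2*d) : ((m : ZMod (2*d+1))).val = m :=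
  ZMod.val_cast_of_lt (by omega)

lemma rlt_char (d : ℕ) (x y : ZMod (2*d+1)) : rltAdj (2*d+1) x y ↔ Rrel d x.val y.val := by
  haveI : NeZero (2*d+1) := ⟨by omega⟩
  have hx : x.val < 2*d+1 := ZMod.val_lt x
  have hy : y.val < 2*d+1 := ZMod.val_lt y
  have key : ∀ m : ℕ, m < 2*d+1 → ((m : ZMod (2*d+1)) = y - x) → (y-x).val = m := by
    intro m hm he; rw [← he, ZMod.val_cast_of_lt hm]
  unfold rltAdj Rrel
  rw [Finset.mem_Icc, show (2*d+1-1)/2 = d by omega]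
  rcases lt_trichotomy x.val y.val with h | h | h
  · have hv : (y - x).val = y.val - x.val := by
      apply key _ (by omega)
      rw [Nat.cast_sub h.le, ZMod.natCast_rightInverse x, ZMod.natCast_rightInverse y]
    rw [hv]; omega
  · have hxy : x = y := ZMod.val_injective _ h
    subst hxy
    simp only [sub_self, ZMod.val_zero]
    omega
  · have hv : (y - x).val = y.val + (2*d+1) - x.val := by
      apply key _ (by omega)
      have : ((y.val + (2*d+1) - x.val : ℕ) : ZMod (2*d+1))
          = (y.val : ZMod (2*d+1)) + (2*d+1 : ℕ) - (x.val : ℕ) := by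
        rw [← Nat.cast_add, ← Nat.cast_sub (by omega)]
      rw [this]
      rw [ZMod.natCast_rightInverse x, ZMod.natCast_rightInverse y, ZMod.natCast_self]
      ring
    rw [hv]; omega

def wfun (d : ℕ) (s : Tup) : Fin 5 → ZMod (2*d+1) :=
  ![0, (s.1 : ZMod (2*d+1)), (s.2.1 : ZMod (2*d+1)), (s.2.2.1 : ZMod (2*d+1)),
    (s.2.2.2 : ZMod (2*d+1))]

def vfun (d : ℕ) (s : Tup) (i j : Fin 4) : Fin 3 → ZMod (2*d+1) :=
  ![0, (cd s i : ZMod (2*d+1)), (cd s j : ZMod (2*d+1))]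

lemma wfun_succ (d : ℕ) (s : Tup) (i : Fin 4) :
    wfun d s i.succ = ((cd s i : ℕ) : ZMod (2*d+1)) := by
  fin_cases i <;> rfl

def gmap (d : ℕ) (x : Tup × (Fin 4 × Fin 4)) :
    (Fin 3 → ZMod (2*d+1)) × (Fin 5 → ZMod (2*d+1)) :=
  (vfun d x.1 x.2.1 x.2.2, wfun d x.1)

lemma mem_Om_iff (d : ℕ) (x : Tup × (Fin 4 × Fin 4)) :
    x ∈ Om d ↔ (x.1.1 ≤ 2*d ∧ x.1.2.1 ≤ 2*d ∧ x.1.2.2.1 ≤ 2*d ∧ x.1.2.2.2 ≤ 2*d)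
      ∧ P5 d x.1 ∧ tri d (cd x.1 x.2.1) (cd x.1 x.2.2) := by
  unfold Om grid
  rw [Finset.mem_filter, Finset.mem_product, Finset.mem_product, Finset.mem_product,
    Finset.mem_product]
  simp only [Finset.mem_range, Finset.mem_univ, and_true]
  constructor
  · rintro ⟨⟨h1, h2, h3, h4⟩, h5, h6⟩; exact ⟨⟨by omega, by omega, by omega, by omega⟩, h5, h6⟩
  · rintro ⟨⟨h1, h2, h3, h4⟩, h5, h6⟩; exact ⟨⟨by omega, by omega, by omega, by omega⟩, h5, h6⟩

lemma cd_inj (s : Tup) (h1 : s.1 ≠ s.2.1) (h2 : s.1 ≠ s.2.2.1) (h3 : s.1 ≠ s.2.2.2)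
    (h4 : s.2.1 ≠ s.2.2.1) (h5 : s.2.1 ≠ s.2.2.2) (h6 : s.2.2.1 ≠ s.2.2.2) :
    ∀ i j : Fin 4, cd s i = cd s j → i = j := by
  intro i j hij
  fin_cases i <;> fin_cases j <;>
    first
    | rfl
    | (exfalso; simp [cd] at hij; omega)

lemma gmap_prop (d : ℕ) (x : Tup × (Fin 4 × Fin 4)) (hx : x ∈ Om d) :
    IsBasedCycleAtZero (2*d+1) 3 (gmap d x).1 ∧ IsBasedCycleAtZero (2*d+1) 5 (gmap d x).2 ∧
      Set.range (gmap d x).1 ⊆ Set.range (gmap d x).2 := by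
  haveI : NeZero (2*d+1) := ⟨by omega⟩
  obtain ⟨⟨a, b, c, e⟩, i, j⟩ := x
  rw [mem_Om_iff] at hx
  obtain ⟨⟨hb1, hb2, hb3, hb4⟩, hP, ht⟩ := hx
  unfold P5 at hP
  obtain ⟨hr0, hr1, hr2, hr3, hr4, hp2, hp3, ne1, ne2, ne3, ne4, ne5, ne6⟩ := hP
  have Hb1 : a ≤ 2*d := hb1
  have Hb2 : b ≤ 2*d := hb2
  have Hb3 : c ≤ 2*d := hb3
  have Hb4 : e ≤ 2*d := hb4
  have Hr0 : Rrel d 0 a := hr0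
  have Hr1 : Rrel d a b := hr1
  have Hr2 : Rrel d b c := hr2
  have Hr3 : Rrel d c e := hr3
  have Hr4 : Rrel d e 0 := hr4
  have Hp2 : 1 ≤ b := hp2
  have Hp3 : 1 ≤ c := hp3
  have Ne1 : a ≠ b := ne1
  have Ne2 : a ≠ c := ne2
  have Ne3 : a ≠ e := ne3
  have Ne4 : b ≠ c := ne4
  have Ne5 : b ≠ e := ne5
  have Ne6 : c ≠ e := ne6
  have g0 : 1 ≤ a := by unfold Rrel at Hr0; omega
  have g3 : 1 ≤ e := by unfold Rrel at Hr4; omega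
  set s : Tup := (a, b, c, e) with hs
  obtain ⟨ht1, ht2, ht3⟩ := ht
  have Ht1 : cd s i ≤ d := ht1
  have Ht2 : d+1 ≤ cd s j := ht2
  have Ht3 : cd s j ≤ cd s i + d := ht3
  have hcdb : ∀ k : Fin 4, cd s k ≤ 2*d := by
    intro k; fin_cases k
    · exact Hb1
    · exact Hb2
    · exact Hb3
    · exact Hb4
  have hcdp : ∀ k : Fin 4, 1 ≤ cd s k := by
    intro k; fin_cases k
    · exact g0
    · exact Hp2
    · exact Hp3
    · exact g3
  have valw : ∀ k : Fin 5, (wfun d s k).val = ![0, a, b, c, e] k := by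
    intro k; fin_cases k
    · exact ZMod.val_zero
    · exact val_natCast' d _ Hb1
    · exact val_natCast' d _ Hb2
    · exact val_natCast' d _ Hb3
    · exact val_natCast' d _ Hb4
  have valv : ∀ k : Fin 3, (vfun d s i j k).val = ![0, cd s i, cd s j] k := by
    intro k; fin_cases k
    · exact ZMod.val_zero
    · exact val_natCast' d _ (hcdb i)
    · exact val_natCast' d _ (hcdb j)
  have Hi := hcdp i
  have Hj := hcdp j
  refine ⟨⟨rfl, ?_, ?_⟩, ⟨rfl, ?_, ?_⟩, ?_⟩
  · -- v injective
    intro k l hkl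
    have hkl' : vfun d s i j k = vfun d s i j l := hkl
    have hv : (![0, cd s i, cd s j] : Fin 3 → ℕ) k = ![0, cd s i, cd s j] l := by
      rw [← valv k, ← valv l, hkl']
    fin_cases k <;> fin_cases l <;>
      first
      | rfl
      | (exfalso; simp at hv; omega)
  · -- v cycle
    intro k
    fin_cases k
    · show rltAdj (2*d+1) (vfun d s i j 0) (vfun d s i j (0+1))
      rw [show ((0:Fin 3)+1) = 1 from rfl, rlt_char, valv 0, valv 1]
      show Rrel d 0 (cd s i)
      unfold Rrel; omega
    · show rltAdj (2*d+1) (vfun d s i j 1) (vfun d s i j (1+1))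
      rw [show ((1:Fin 3)+1) = 2 from rfl, rlt_char, valv 1, valv 2]
      show Rrel d (cd s i) (cd s j)
      unfold Rrel; omega
    · show rltAdj (2*d+1) (vfun d s i j 2) (vfun d s i j (2+1))
      rw [show ((2:Fin 3)+1) = 0 from rfl, rlt_char, valv 2, valv 0]
      show Rrel d (cd s j) 0
      have := hcdb j
      unfold Rrel; omega
  · -- w injective
    intro k l hkl
    have hkl' : wfun d s k = wfun d s l := hkl
    have hv : (![0, a, b, c, e] : Fin 5 → ℕ) k = ![0, a, b, c, e] l := by
      rw [← valw k, ← valw l, hkl']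
    fin_cases k <;> fin_cases l <;>
      first
      | rfl
      | (exfalso; simp at hv; omega)
  · -- w cycle
    intro k
    fin_cases k
    · show rltAdj (2*d+1) (wfun d s 0) (wfun d s (0+1))
      rw [show ((0:Fin 5)+1) = 1 from rfl, rlt_char, valw 0, valw 1]; exact Hr0
    · show rltAdj (2*d+1) (wfun d s 1) (wfun d s (1+1))
      rw [show ((1:Fin 5)+1) = 2 from rfl, rlt_char, valw 1, valw 2]; exact Hr1
    · show rltAdj (2*d+1) (wfun d s 2) (wfun d s (2+1))
      rw [show ((2:Fin 5)+1) = 3 from rfl, rlt_char, valw 2, valw 3]; exact Hr2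
    · show rltAdj (2*d+1) (wfun d s 3) (wfun d s (3+1))
      rw [show ((3:Fin 5)+1) = 4 from rfl, rlt_char, valw 3, valw 4]; exact Hr3
    · show rltAdj (2*d+1) (wfun d s 4) (wfun d s (4+1))
      rw [show ((4:Fin 5)+1) = 0 from rfl, rlt_char, valw 4, valw 0]; exact Hr4
  · -- range
    rintro z ⟨k, rfl⟩
    fin_cases k
    · exact ⟨0, rfl⟩
    · exact ⟨i.succ, wfun_succ d s i⟩
    · exact ⟨j.succ, wfun_succ d s j⟩

lemma master (d : ℕ) :
    Nat.card {p : (Fin 3 → ZMod (2*d+1)) × (Fin 5 → ZMod (2*d+1)) //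
      IsBasedCycleAtZero (2*d+1) 3 p.1 ∧ IsBasedCycleAtZero (2*d+1) 5 p.2 ∧
      Set.range p.1 ⊆ Set.range p.2} = (Om d).card := by
  haveI : NeZero (2*d+1) := ⟨by omega⟩
  rw [← Nat.card_eq_finsetCard (Om d)]
  apply Nat.card_congr
  apply Equiv.symm
  apply Equiv.ofBijective (f := fun x : {y // y ∈ Om d} => (⟨gmap d x.1, gmap_prop d x.1 x.2⟩ :
    {p : (Fin 3 → ZMod (2*d+1)) × (Fin 5 → ZMod (2*d+1)) //
      IsBasedCycleAtZero (2*d+1) 3 p.1 ∧ IsBasedCycleAtZero (2*d+1) 5 p.2 ∧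
      Set.range p.1 ⊆ Set.range p.2}))
  constructor
  · -- injective
    rintro ⟨⟨⟨a, b, c, e⟩, i, j⟩, hx⟩ ⟨⟨⟨a', b', c', e'⟩, i', j'⟩, hy⟩ hxy
    rw [mem_Om_iff] at hx hy
    obtain ⟨⟨hb1, hb2, hb3, hb4⟩, hP, -⟩ := hx
    obtain ⟨⟨hc1, hc2, hc3, hc4⟩, hQ, -⟩ := hy
    simp only [Subtype.mk.injEq, gmap, Prod.mk.injEq] at hxy
    obtain ⟨hv, hw⟩ := hxy
    have q1 : a = a' := by
      have h := congrArg (fun f => (f 1).val) hw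
      simpa only [wfun, Matrix.cons_val_one, Matrix.head_cons, Matrix.cons_val_zero,
        val_natCast' d _ hb1, val_natCast' d _ hc1] using h
    have q2 : b = b' := by
      have h := congrArg (fun f => (f 2).val) hw
      simpa only [wfun, show ∀ z1 z2 z3 z4 z5 : ZMod (2*d+1), ![z1,z2,z3,z4,z5] 2 = z3 from
        fun _ _ _ _ _ => rfl, val_natCast' d _ hb2, val_natCast' d _ hc2] using h
    have q3 : c = c' := by
      have h := congrArg (fun f => (f 3).val) hw
      simpa only [wfun, show ∀ z1 z2 z3 z4 z5 : ZMod (2*d+1), ![z1,z2,z3,z4,z5] 3 = z4 from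
        fun _ _ _ _ _ => rfl, val_natCast' d _ hb3, val_natCast' d _ hc3] using h
    have q4 : e = e' := by
      have h := congrArg (fun f => (f 4).val) hw
      simpa only [wfun, show ∀ z1 z2 z3 z4 z5 : ZMod (2*d+1), ![z1,z2,z3,z4,z5] 4 = z5 from
        fun _ _ _ _ _ => rfl, val_natCast' d _ hb4, val_natCast' d _ hc4] using h
    subst q1; subst q2; subst q3; subst q4
    unfold P5 at hP
    obtain ⟨-, -, -, -, -, -, -, ne1, ne2, ne3, ne4, ne5, ne6⟩ := hP
    have hcdb : ∀ k : Fin 4, cd (a,b,c,e) k ≤ 2*d := by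
      intro k; fin_cases k <;> simp only [cd0, cd1, cd2, cd3] <;> assumption
    have qi : i = i' := by
      have h := congrArg (fun f => (f 1).val) hv
      simp only [vfun, Matrix.cons_val_one, Matrix.head_cons, Matrix.cons_val_zero,
        val_natCast' d _ (hcdb i), val_natCast' d _ (hcdb i')] at h
      exact cd_inj (a,b,c,e) ne1 ne2 ne3 ne4 ne5 ne6 i i' h
    have qj : j = j' := by
      have h := congrArg (fun f => (f 2).val) hv
      simp only [vfun, show ∀ z1 z2 z3 : ZMod (2*d+1), ![z1,z2,z3] 2 = z3 from
        fun _ _ _ => rfl, val_natCast' d _ (hcdb j), val_natCast' d _ (hcdb j')] at h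
      exact cd_inj (a,b,c,e) ne1 ne2 ne3 ne4 ne5 ne6 j j' h
    subst qi; subst qj
    rfl
  · -- surjective
    rintro ⟨⟨v, w⟩, hv, hw, hsub⟩
    obtain ⟨hv0, hvinj, hvcyc⟩ := hv
    obtain ⟨hw0, hwinj, hwcyc⟩ := hw
    have Hv0 : v 0 = 0 := hv0
    have Hvinj : Function.Injective v := hvinj
    have Hvcyc : ∀ k : Fin 3, rltAdj (2*d+1) (v k) (v (k+1)) := hvcyc
    have Hw0 : w 0 = 0 := hw0
    have Hwinj : Function.Injective w := hwinj
    have Hwcyc : ∀ k : Fin 5, rltAdj (2*d+1) (w k) (w (k+1)) := hwcyc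
    have Hsub : Set.range v ⊆ Set.range w := hsub
    set s : Tup := ((w 1).val, (w 2).val, (w 3).val, (w 4).val) with hs
    have hb : ∀ k : Fin 5, (w k).val ≤ 2*d := by
      intro k; have := ZMod.val_lt (w k); omega
    have hw0v : (w 0).val = 0 := by rw [Hw0]; exact ZMod.val_zero
    have hv0v : (v 0).val = 0 := by rw [Hv0]; exact ZMod.val_zero
    have hwv : ∀ k l : Fin 5, k ≠ l → (w k).val ≠ (w l).val :=
      fun k l hkl hh => hkl (Hwinj (ZMod.val_injective _ hh))
    have hv1r : v 1 ∈ Set.range w := Hsub ⟨1, rfl⟩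
    have hv2r : v 2 ∈ Set.range w := Hsub ⟨2, rfl⟩
    obtain ⟨k1, hk1⟩ := hv1r
    obtain ⟨k2, hk2⟩ := hv2r
    have k1ne : k1 ≠ 0 := by
      intro h
      rw [h, Hw0] at hk1
      have : (1 : Fin 3) = 0 := Hvinj (by rw [Hv0, ← hk1])
      exact absurd this (by decide)
    have k2ne : k2 ≠ 0 := by
      intro h
      rw [h, Hw0] at hk2
      have : (2 : Fin 3) = 0 := Hvinj (by rw [Hv0, ← hk2])
      exact absurd this (by decide)
    obtain ⟨i, rfl⟩ := Fin.eq_succ_of_ne_zero k1ne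
    obtain ⟨j, rfl⟩ := Fin.eq_succ_of_ne_zero k2ne
    have cds : ∀ k : Fin 4, cd s k = (w k.succ).val := by
      intro k; fin_cases k <;> rfl
    have hch : ∀ k : Fin 5, Rrel d (w k).val (w (k+1)).val :=
      fun k => (rlt_char d _ _).mp (Hwcyc k)
    have hch0 := hch 0
    have hch1 := hch 1
    have hch2 := hch 2
    have hch3 := hch 3
    have hch4 := hch 4
    rw [show ((0:Fin 5)+1) = 1 from rfl, hw0v] at hch0
    rw [show ((1:Fin 5)+1) = 2 from rfl] at hch1
    rw [show ((2:Fin 5)+1) = 3 from rfl] at hch2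
    rw [show ((3:Fin 5)+1) = 4 from rfl] at hch3
    rw [show ((4:Fin 5)+1) = 0 from rfl, hw0v] at hch4
    have hvch0 := (rlt_char d _ _).mp (Hvcyc 0)
    have hvch1 := (rlt_char d _ _).mp (Hvcyc 1)
    have hvch2 := (rlt_char d _ _).mp (Hvcyc 2)
    rw [show ((0:Fin 3)+1) = 1 from rfl, hv0v] at hvch0
    rw [show ((1:Fin 3)+1) = 2 from rfl] at hvch1
    rw [show ((2:Fin 3)+1) = 0 from rfl, hv0v] at hvch2
    have hv1e : (v 1).val = (w i.succ).val := by rw [hk1]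
    have hv2e : (v 2).val = (w j.succ).val := by rw [hk2]
    have hmem : ((s, (i, j)) : Tup × (Fin 4 × Fin 4)) ∈ Om d := by
      rw [mem_Om_iff]
      refine ⟨⟨hb 1, hb 2, hb 3, hb 4⟩, ?_, ?_⟩
      · show P5 d s
        unfold P5
        refine ⟨hch0, hch1, hch2, hch3, hch4, ?_, ?_, ?_, ?_, ?_, ?_, ?_, ?_⟩
        · show 1 ≤ (w 2).val
          have := hwv 2 0 (by decide); omega
        · show 1 ≤ (w 3).val
          have := hwv 3 0 (by decide); omega
        · exact hwv 1 2 (by decide)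
        · exact hwv 1 3 (by decide)
        · exact hwv 1 4 (by decide)
        · exact hwv 2 3 (by decide)
        · exact hwv 2 4 (by decide)
        · exact hwv 3 4 (by decide)
      · show tri d (cd s i) (cd s j)
        rw [cds i, cds j, ← hv1e, ← hv2e]
        unfold tri
        unfold Rrel at hvch0 hvch1 hvch2
        omega
    refine ⟨⟨(s, (i, j)), hmem⟩, ?_⟩
    apply Subtype.ext
    apply Prod.ext
    · funext k
      fin_cases k
      · exact Hv0.symm
      · show ((cd s i : ℕ) : ZMod (2*d+1)) = v 1
        rw [cds i]
        exact (ZMod.natCast_rightInverse _).trans hk1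
      · show ((cd s j : ℕ) : ZMod (2*d+1)) = v 2
        rw [cds j]
        exact (ZMod.natCast_rightInverse _).trans hk2
    · funext k
      fin_cases k
      · exact Hw0.symm
      · exact ZMod.natCast_rightInverse (w 1)
      · exact ZMod.natCast_rightInverse (w 2)
      · exact ZMod.natCast_rightInverse (w 3)
      · exact ZMod.natCast_rightInverse (w 4)


end RLTPf

theorem pairs_three_five_cycles_nested_of_RLT
    (n : ℕ) (hodd : Odd n) (hn : 1 ≤ n) (δ : ℕ) (hδ : δ = (n - 1) / 2) :
    8 * (Nat.card {p : (Fin 3 → ZMod n) × (Fin 5 → ZMod n) //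
        IsBasedCycleAtZero n 3 p.1 ∧ IsBasedCycleAtZero n 5 p.2 ∧
        Set.range p.1 ⊆ Set.range p.2} : ℤ)
      = ((δ : ℤ) - 1) * (δ : ℤ) * ((δ : ℤ) + 1) * (9 * (δ : ℤ) - 10) := by
  subst hδ
  obtain ⟨d, rfl⟩ : ∃ d, n = 2*d+1 := by
    obtain ⟨k, hk⟩ := hodd; exact ⟨k, by omega⟩
  rw [show (2*d+1-1)/2 = d from by omega]
  rw [RLTPf.master d]
  rcases Nat.lt_or_ge d 2 with hd | hd
  · have hO : RLTPf.Om d = ∅ := by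
      rw [Finset.eq_empty_iff_forall_notMem]
      rintro ⟨s, i, j⟩ hx
      rw [RLTPf.mem_Om_iff] at hx
      obtain ⟨⟨hb1, hb2, hb3, hb4⟩, hP, -⟩ := hx
      unfold RLTPf.P5 RLTPf.Rrel at hP
      omega
    rw [hO]
    simp only [Finset.card_empty, Nat.cast_zero, mul_zero]
    interval_cases d <;> norm_num
  · have e1 := RLTPf.A12_val d (by omega)
    have e2 := RLTPf.A13_val d (by omega)
    have e3 := RLTPf.B_val d hd
    rw [RLTPf.Om_card d, RLTPf.A14_card, RLTPf.A34_card, RLTPf.A23_card, RLTPf.A24_card]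
    push_cast
    apply mul_left_cancel₀ (show (216:ℤ) ≠ 0 by norm_num)
    linear_combination 3*e1 + 3*e2 + 3*e3
end

section
/- For each odd n ≥ 1, write δ = (n−1)/2 and let N⁺(0) be the out-set of vertex 0 in RLT_n. The number of ordered pairs (γ₁, γ₂) of 4-cycles through vertex 0 such that γ₁ and γ₂ have a common vertex lying in N⁺(0) (i.e., V(γ₁)∩N⁺(0)∩V(γ₂) ≠ ∅) equals (δ−1)δ(δ+1)(13δ²−7δ−10)/12. -/
namespace RLTpf
open Finset

def T (δ : ℕ) : Finset (ℕ × ℕ × ℕ) :=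
  (Finset.range (2*δ+1) ×ˢ Finset.range (2*δ+1) ×ˢ Finset.range (2*δ+1)).filter
    (fun t => 1 ≤ t.1 ∧ t.1 ≤ δ ∧ t.1 < t.2.1 ∧ t.2.1 ≤ t.1 + δ ∧ t.2.1 < t.2.2 ∧
      t.2.2 ≤ t.2.1 + δ ∧ 2*δ+1 ≤ t.2.2 + δ)

lemma mem_T {δ : ℕ} {t : ℕ × ℕ × ℕ} : t ∈ T δ ↔
    (1 ≤ t.1 ∧ t.1 ≤ δ ∧ t.1 < t.2.1 ∧ t.2.1 ≤ t.1 + δ ∧ t.2.1 < t.2.2 ∧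
      t.2.2 ≤ t.2.1 + δ ∧ t.2.2 < 2*δ+1 ∧ 2*δ+1 ≤ t.2.2 + δ) := by
  simp only [T, Finset.mem_filter, Finset.mem_product, Finset.mem_range]
  omega

def A (δ : ℕ) (t : ℕ × ℕ × ℕ) : Finset ℕ := if t.2.1 ≤ δ then {t.1, t.2.1} else {t.1}

lemma A_card_le (δ : ℕ) (t : ℕ × ℕ × ℕ) : (A δ t).card ≤ 2 := by
  unfold A
  split_ifs
  · exact (Finset.card_insert_le _ _).trans (by simp)
  · simp

lemma A_sub {δ : ℕ} {t : ℕ × ℕ × ℕ} (ht : t ∈ T δ) : A δ t ⊆ Finset.Icc 1 δ := by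
  rw [mem_T] at ht
  unfold A
  split_ifs with h <;> intro x hx <;> simp only [Finset.mem_insert, Finset.mem_singleton] at hx <;>
    simp only [Finset.mem_Icc] <;> omega

lemma A_card_two {δ : ℕ} {t : ℕ × ℕ × ℕ} (ht : t ∈ T δ) :
    (A δ t).card = 2 ↔ t.2.1 ≤ δ := by
  rw [mem_T] at ht
  unfold A
  split_ifs with h
  · rw [Finset.card_insert_of_notMem (by simp; omega), Finset.card_singleton]
    simp [h]
  · simp [h]

lemma mem_A_iff' {δ : ℕ} {t : ℕ × ℕ × ℕ} {x : ℕ} :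
    x ∈ A δ t ↔ (t.1 = x ∨ (t.2.1 ≤ δ ∧ t.2.1 = x)) := by
  unfold A
  split_ifs with h <;> simp [eq_comm, h] <;> tauto

lemma A_eq_two_iff {δ : ℕ} {t₁ t₂ : ℕ × ℕ × ℕ} (h₁ : t₁ ∈ T δ) (h₂ : t₂ ∈ T δ) :
    (A δ t₁ = A δ t₂ ∧ (A δ t₁).card = 2) ↔
      (t₁.2.1 ≤ δ ∧ t₂.2.1 ≤ δ ∧ t₁.1 = t₂.1 ∧ t₁.2.1 = t₂.2.1) := by
  rw [mem_T] at h₁ h₂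
  constructor
  · rintro ⟨heq, hc⟩
    have hb₁ : t₁.2.1 ≤ δ := by
      by_contra hb
      simp only [A, if_neg hb] at hc
      simp at hc
    have hb₂ : t₂.2.1 ≤ δ := by
      by_contra hb
      rw [heq] at hc
      simp only [A, if_neg hb] at hc
      simp at hc
    simp only [A, if_pos hb₁, if_pos hb₂] at heq
    have m1 : t₁.1 ∈ ({t₂.1, t₂.2.1} : Finset ℕ) := by
      rw [← heq]; exact Finset.mem_insert_self _ _
    have m2 : t₁.2.1 ∈ ({t₂.1, t₂.2.1} : Finset ℕ) := by
      rw [← heq]; exact Finset.mem_insert_of_mem (Finset.mem_singleton_self _)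
    have m3 : t₂.1 ∈ ({t₁.1, t₁.2.1} : Finset ℕ) := by
      rw [heq]; exact Finset.mem_insert_self _ _
    simp only [Finset.mem_insert, Finset.mem_singleton] at m1 m2 m3
    exact ⟨hb₁, hb₂, by omega, by omega⟩
  · rintro ⟨hb₁, hb₂, he₁, he₂⟩
    have : A δ t₁ = A δ t₂ := by simp only [A, if_pos hb₁, if_pos hb₂, he₁, he₂]
    refine ⟨this, ?_⟩
    simp only [A, if_pos hb₁]
    rw [Finset.card_insert_of_notMem (by simp; omega), Finset.card_singleton]

lemma inter_card_split {s t : Finset ℕ} (hs : s.card ≤ 2) (ht : t.card ≤ 2) :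
    (s ∩ t).card = (if (s ∩ t).Nonempty then 1 else 0) +
      (if s = t ∧ s.card = 2 then 1 else 0) := by
  by_cases hne : (s ∩ t).Nonempty
  · by_cases heq : s = t ∧ s.card = 2
    · obtain ⟨rfl, h2⟩ := heq
      rw [if_pos hne, if_pos ⟨rfl, h2⟩, Finset.inter_self]
      omega
    · rw [if_pos hne, if_neg heq]
      have hle : (s ∩ t).card ≤ 2 := le_trans (Finset.card_le_card Finset.inter_subset_left) hs
      have hpos : 1 ≤ (s ∩ t).card := Finset.card_pos.mpr hne
      have hne2 : (s ∩ t).card ≠ 2 := by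
        intro h2
        have e1 : s ∩ t = s := Finset.eq_of_subset_of_card_le Finset.inter_subset_left (by omega)
        have e2 : s ∩ t = t := Finset.eq_of_subset_of_card_le Finset.inter_subset_right (by omega)
        exact heq ⟨e1.symm.trans e2, by rw [← e1]; exact h2⟩
      omega
  · rw [if_neg hne]
    rw [Finset.not_nonempty_iff_eq_empty] at hne
    rw [hne, Finset.card_empty]
    have : ¬ (s = t ∧ s.card = 2) := by
      rintro ⟨rfl, h2⟩
      rw [Finset.inter_self] at hne
      rw [hne] at h2
      simp at h2
    rw [if_neg this]



lemma gaussZ (m : ℕ) : ∀ k : ℕ, m ≤ k →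
    2 * ∑ i ∈ Finset.Ioc m k, (i : ℤ) = ((k:ℤ) + m + 1) * ((k:ℤ) - m) := by
  intro k
  induction k with
  | zero => intro h; interval_cases m; simp
  | succ k ih =>
    intro h
    rcases Nat.lt_or_ge m (k+1) with h' | h'
    · have hmk : m ≤ k := by omega
      rw [Finset.sum_Ioc_succ_top hmk]
      push_cast
      linear_combination ih hmk
    · have : m = k + 1 := by omega
      subst this; simp

lemma pow1 (δ : ℕ) : 2 * ∑ x ∈ Finset.Icc 1 δ, (x:ℤ) = (δ:ℤ) * (δ + 1) := by
  induction δ with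
  | zero => simp
  | succ k ih =>
    rw [Finset.sum_Icc_succ_top (by omega)]
    push_cast
    linear_combination ih

lemma pow2 (δ : ℕ) : 6 * ∑ x ∈ Finset.Icc 1 δ, (x:ℤ)^2 = (δ:ℤ) * (δ + 1) * (2*δ + 1) := by
  induction δ with
  | zero => simp
  | succ k ih =>
    rw [Finset.sum_Icc_succ_top (by omega)]
    push_cast
    linear_combination ih

lemma pow3 (δ : ℕ) : 4 * ∑ x ∈ Finset.Icc 1 δ, (x:ℤ)^3 = ((δ:ℤ) * (δ + 1))^2 := by
  induction δ with
  | zero => simp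
  | succ k ih =>
    rw [Finset.sum_Icc_succ_top (by omega)]
    push_cast
    linear_combination ih



lemma count_plus (δ : ℕ) :
    ((T δ ×ˢ T δ).filter (fun q => (A δ q.1 ∩ A δ q.2).Nonempty)).card
      + ((T δ ×ˢ T δ).filter (fun q =>
          q.1.2.1 ≤ δ ∧ q.2.2.1 ≤ δ ∧ q.1.1 = q.2.1 ∧ q.1.2.1 = q.2.2.1)).card
    = ∑ x ∈ Finset.Icc 1 δ, ((T δ).filter (fun t => x ∈ A δ t)).card ^ 2 := by
  have rhs : ∀ x : ℕ, ((T δ).filter (fun t => x ∈ A δ t)).card ^ 2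
      = ∑ q ∈ T δ ×ˢ T δ,
          (if x ∈ A δ q.1 then 1 else 0) * (if x ∈ A δ q.2 then 1 else 0) := by
    intro x
    rw [Finset.card_filter, sq, Finset.sum_mul_sum]
    rw [Finset.sum_product]
  calc ((T δ ×ˢ T δ).filter (fun q => (A δ q.1 ∩ A δ q.2).Nonempty)).card
      + ((T δ ×ˢ T δ).filter (fun q =>
          q.1.2.1 ≤ δ ∧ q.2.2.1 ≤ δ ∧ q.1.1 = q.2.1 ∧ q.1.2.1 = q.2.2.1)).card
      = ∑ q ∈ T δ ×ˢ T δ, ((if (A δ q.1 ∩ A δ q.2).Nonempty then 1 else 0)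
          + (if q.1.2.1 ≤ δ ∧ q.2.2.1 ≤ δ ∧ q.1.1 = q.2.1 ∧ q.1.2.1 = q.2.2.1 then 1 else 0)) := by
        rw [Finset.card_filter, Finset.card_filter, ← Finset.sum_add_distrib]
    _ = ∑ q ∈ T δ ×ˢ T δ, ∑ x ∈ Finset.Icc 1 δ,
          (if x ∈ A δ q.1 then 1 else 0) * (if x ∈ A δ q.2 then 1 else 0) := by
        apply Finset.sum_congr rfl
        intro q hq
        rw [Finset.mem_product] at hq
        have h1 := hq.1
        have h2 := hq.2
        have step1 : ∀ x : ℕ, (if x ∈ A δ q.1 then (1:ℕ) else 0) * (if x ∈ A δ q.2 then 1 else 0)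
            = if x ∈ A δ q.1 ∩ A δ q.2 then 1 else 0 := by
          intro x
          simp only [Finset.mem_inter]
          split_ifs <;> simp_all
        rw [Finset.sum_congr rfl (fun x _ => step1 x), ← Finset.card_filter,
          Finset.filter_mem_eq_inter,
          Finset.inter_eq_right.mpr ((Finset.inter_subset_left).trans (A_sub h1)),
          inter_card_split (A_card_le δ q.1) (A_card_le δ q.2)]
        congr 1
        simp only [A_eq_two_iff h1 h2]
    _ = ∑ x ∈ Finset.Icc 1 δ, ((T δ).filter (fun t => x ∈ A δ t)).card ^ 2 := by
        rw [Finset.sum_comm]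
        exact Finset.sum_congr rfl fun x _ => (rhs x).symm

lemma cnt_eval {δ x y : ℕ} (hx : x ∈ Finset.Icc 1 δ) (hy : y ∈ Finset.Icc 1 δ) :
    ((T δ).filter (fun t => t.1 = x ∧ t.2.1 = y ∧ t.2.1 ≤ δ)).card
      = if x < y then y else 0 := by
  rw [Finset.mem_Icc] at hx hy
  split_ifs with hlt
  · have he : (T δ).filter (fun t => t.1 = x ∧ t.2.1 = y ∧ t.2.1 ≤ δ)
        = {x} ×ˢ {y} ×ˢ Finset.Icc (δ+1) (y+δ) := by
      ext ⟨a, b, c⟩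
      simp only [Finset.mem_filter, mem_T, Finset.mem_product, Finset.mem_singleton,
        Finset.mem_Icc]
      omega
    rw [he]
    simp only [Finset.card_product, Finset.card_singleton, Nat.card_Icc, one_mul]
    omega
  · rw [Finset.card_eq_zero, Finset.filter_eq_empty_iff]
    intro t ht
    rw [mem_T] at ht
    omega

lemma D_eval (δ : ℕ) :
    ((T δ ×ˢ T δ).filter (fun q =>
        q.1.2.1 ≤ δ ∧ q.2.2.1 ≤ δ ∧ q.1.1 = q.2.1 ∧ q.1.2.1 = q.2.2.1)).card
      = ∑ y ∈ Finset.Icc 1 δ, (y - 1) * y ^ 2 := by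
  rw [Finset.card_eq_sum_card_fiberwise (f := fun q => (q.1.1, q.1.2.1))
    (t := Finset.Icc 1 δ ×ˢ Finset.Icc 1 δ)
    (by
      intro q hq
      rw [Finset.mem_coe, Finset.mem_filter, Finset.mem_product] at hq
      obtain ⟨⟨hq1, hq2⟩, hc⟩ := hq
      rw [mem_T] at hq1 hq2
      simp only [Finset.mem_coe, Finset.mem_product, Finset.mem_Icc]
      omega)]
  rw [Finset.sum_product]
  have fib : ∀ x ∈ Finset.Icc 1 δ, ∀ y ∈ Finset.Icc 1 δ,
      (((T δ ×ˢ T δ).filter (fun q =>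
        q.1.2.1 ≤ δ ∧ q.2.2.1 ≤ δ ∧ q.1.1 = q.2.1 ∧ q.1.2.1 = q.2.2.1)).filter
          (fun q => (q.1.1, q.1.2.1) = (x, y))).card
      = (if x < y then y else 0) ^ 2 := by
    intro x hx y hy
    have he : ((T δ ×ˢ T δ).filter (fun q =>
        q.1.2.1 ≤ δ ∧ q.2.2.1 ≤ δ ∧ q.1.1 = q.2.1 ∧ q.1.2.1 = q.2.2.1)).filter
          (fun q => (q.1.1, q.1.2.1) = (x, y))
        = ((T δ).filter (fun t => t.1 = x ∧ t.2.1 = y ∧ t.2.1 ≤ δ)) ×ˢ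
          ((T δ).filter (fun t => t.1 = x ∧ t.2.1 = y ∧ t.2.1 ≤ δ)) := by
      ext ⟨⟨a1, b1, c1⟩, ⟨a2, b2, c2⟩⟩
      simp only [Finset.mem_filter, Finset.mem_product, mem_T, Prod.mk.injEq]
      constructor
      · intro h; omega
      · intro h; omega
    rw [he, Finset.card_product, cnt_eval hx hy, sq]
  rw [Finset.sum_congr rfl (fun x hx => Finset.sum_congr rfl (fun y hy => fib x hx y hy))]
  rw [Finset.sum_comm]
  apply Finset.sum_congr rfl
  intro y hy
  rw [Finset.mem_Icc] at hy
  have : ∀ x ∈ Finset.Icc 1 δ, (if x < y then y else 0)^2 = if x < y then y^2 else 0 := by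
    intro x _; split_ifs <;> simp
  rw [Finset.sum_congr rfl this, ← Finset.sum_filter]
  have hf : (Finset.Icc 1 δ).filter (· < y) = Finset.Ico 1 y := by
    ext a; simp only [Finset.mem_filter, Finset.mem_Icc, Finset.mem_Ico]; omega
  rw [hf, Finset.sum_const, Nat.card_Ico, smul_eq_mul]

lemma cardB {δ x : ℕ} (h1 : 1 ≤ x) (h2 : x ≤ δ) :
    ((T δ).filter (fun t => t.2.1 ≤ δ ∧ t.2.1 = x)).card = (x - 1) * x := by
  have he : (T δ).filter (fun t => t.2.1 ≤ δ ∧ t.2.1 = x)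
      = Finset.Ico 1 x ×ˢ {x} ×ˢ Finset.Icc (δ+1) (δ+x) := by
    ext ⟨a, b, c⟩
    simp only [Finset.mem_filter, mem_T, Finset.mem_product, Finset.mem_singleton,
      Finset.mem_Ico, Finset.mem_Icc]
    omega
  rw [he]
  simp only [Finset.card_product, Finset.card_singleton, Nat.card_Icc, Nat.card_Ico, one_mul]
  have : δ + x + 1 - (δ + 1) = x := by omega
  rw [this]

lemma cardA {δ x : ℕ} (h1 : 1 ≤ x) (h2 : x ≤ δ) :
    2 * (((T δ).filter (fun t => t.1 = x)).card : ℤ)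
      = (δ:ℤ)^2 + δ + 2*δ*x - 2*x^2 - 2*x := by
  have key : ((T δ).filter (fun t => t.1 = x)).card
      = (∑ b ∈ Finset.Ioc x δ, b) + ∑ b ∈ Finset.Ioc δ (x+δ), (2*δ - b) := by
    rw [Finset.card_eq_sum_card_fiberwise (f := fun t => t.2.1) (t := Finset.Ioc x (x+δ))
      (by
        intro t ht
        rw [Finset.mem_coe, Finset.mem_filter, mem_T] at ht
        simp only [Finset.mem_coe, Finset.mem_Ioc]
        omega)]
    rw [← Finset.sum_Ioc_consecutive _ (show x ≤ δ by omega) (show δ ≤ x + δ by omega)]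
    congr 1
    · apply Finset.sum_congr rfl
      intro b hb
      rw [Finset.mem_Ioc] at hb
      have he : ((T δ).filter (fun t => t.1 = x)).filter (fun t => t.2.1 = b)
          = {x} ×ˢ {b} ×ˢ Finset.Icc (δ+1) (b+δ) := by
        ext ⟨a, b', c⟩
        simp only [Finset.mem_filter, mem_T, Finset.mem_product, Finset.mem_singleton,
          Finset.mem_Icc]
        omega
      rw [he]
      simp only [Finset.card_product, Finset.card_singleton, Nat.card_Icc, one_mul]
      omega
    · apply Finset.sum_congr rfl
      intro b hb
      rw [Finset.mem_Ioc] at hb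
      have he : ((T δ).filter (fun t => t.1 = x)).filter (fun t => t.2.1 = b)
          = {x} ×ˢ {b} ×ˢ Finset.Icc (b+1) (2*δ) := by
        ext ⟨a, b', c⟩
        simp only [Finset.mem_filter, mem_T, Finset.mem_product, Finset.mem_singleton,
          Finset.mem_Icc]
        omega
      rw [he]
      simp only [Finset.card_product, Finset.card_singleton, Nat.card_Icc, one_mul]
      try omega
  rw [key]
  push_cast
  have c2 : (∑ b ∈ Finset.Ioc δ (x+δ), ((2*δ - b : ℕ) : ℤ))
      = ∑ b ∈ Finset.Ioc δ (x+δ), (2*(δ:ℤ) - (b:ℤ)) := by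
    apply Finset.sum_congr rfl
    intro b hb
    rw [Finset.mem_Ioc] at hb
    have : (b:ℕ) ≤ 2*δ := by omega
    push_cast [Nat.cast_sub this]
    ring
  rw [c2, Finset.sum_sub_distrib, Finset.sum_const, Nat.card_Ioc]
  have hcard : (x + δ - δ) = x := by omega
  rw [hcard]
  have g1 := gaussZ x δ h2
  have g2 := gaussZ δ (x+δ) (by omega)
  push_cast at g1 g2
  push_cast
  linear_combination g1 - g2

lemma f_eval {δ x : ℕ} (h1 : 1 ≤ x) (h2 : x ≤ δ) :
    2 * (((T δ).filter (fun t => x ∈ A δ t)).card : ℤ)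
      = (δ:ℤ)^2 + δ + (2*δ - 4)*x := by
  have hsplit : (T δ).filter (fun t => x ∈ A δ t)
      = (T δ).filter (fun t => t.1 = x) ∪ (T δ).filter (fun t => t.2.1 ≤ δ ∧ t.2.1 = x) := by
    rw [← Finset.filter_or]
    apply Finset.filter_congr
    intro t ht
    rw [mem_A_iff']
  have hdisj : Disjoint ((T δ).filter (fun t => t.1 = x))
      ((T δ).filter (fun t => t.2.1 ≤ δ ∧ t.2.1 = x)) := by
    rw [Finset.disjoint_filter]
    intro t ht hp
    rw [mem_T] at ht
    omega
  rw [hsplit, Finset.card_union_of_disjoint hdisj, cardB h1 h2]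
  push_cast
  have hc : (((x:ℕ) - 1 : ℕ) : ℤ) = (x:ℤ) - 1 := by
    rw [Nat.cast_sub h1]; norm_num
  rw [hc]
  linear_combination cardA h1 h2

lemma sumf (δ : ℕ) :
    24 * ∑ x ∈ Finset.Icc 1 δ, (((T δ).filter (fun t => x ∈ A δ t)).card : ℤ)^2
      = 6*(δ:ℤ)*((δ:ℤ)^2+(δ:ℤ))^2
        + 6*((δ:ℤ)^2+(δ:ℤ))*(2*(δ:ℤ)-4)*((δ:ℤ)*((δ:ℤ)+1))
        + (2*(δ:ℤ)-4)^2*((δ:ℤ)*((δ:ℤ)+1)*(2*(δ:ℤ)+1)) := by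
  have hs : ∑ x ∈ Finset.Icc 1 δ, (2 * (((T δ).filter (fun t => x ∈ A δ t)).card : ℤ))^2
      = ∑ x ∈ Finset.Icc 1 δ, (((δ:ℤ)^2+(δ:ℤ))^2
          + (2*((δ:ℤ)^2+(δ:ℤ))*(2*(δ:ℤ)-4))*(x:ℤ) + (2*(δ:ℤ)-4)^2*(x:ℤ)^2) := by
    apply Finset.sum_congr rfl
    intro x hx
    rw [Finset.mem_Icc] at hx
    rw [f_eval hx.1 hx.2]
    ring
  have h4 : ∑ x ∈ Finset.Icc 1 δ, (2 * (((T δ).filter (fun t => x ∈ A δ t)).card : ℤ))^2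
      = 4 * ∑ x ∈ Finset.Icc 1 δ, (((T δ).filter (fun t => x ∈ A δ t)).card : ℤ)^2 := by
    rw [Finset.mul_sum]
    apply Finset.sum_congr rfl
    intro x _
    ring
  have hsum : ∑ x ∈ Finset.Icc 1 δ, (((δ:ℤ)^2+(δ:ℤ))^2
          + (2*((δ:ℤ)^2+(δ:ℤ))*(2*(δ:ℤ)-4))*(x:ℤ) + (2*(δ:ℤ)-4)^2*(x:ℤ)^2)
      = (δ:ℤ)*((δ:ℤ)^2+(δ:ℤ))^2
        + (2*((δ:ℤ)^2+(δ:ℤ))*(2*(δ:ℤ)-4)) * (∑ x ∈ Finset.Icc 1 δ, (x:ℤ))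
        + (2*(δ:ℤ)-4)^2 * (∑ x ∈ Finset.Icc 1 δ, (x:ℤ)^2) := by
    rw [Finset.sum_add_distrib, Finset.sum_add_distrib, Finset.sum_const, Nat.card_Icc,
      ← Finset.mul_sum, ← Finset.mul_sum]
    have : δ + 1 - 1 = δ := by omega
    rw [this]
    push_cast
    ring
  have E : 4 * ∑ x ∈ Finset.Icc 1 δ, (((T δ).filter (fun t => x ∈ A δ t)).card : ℤ)^2
      = (δ:ℤ)*((δ:ℤ)^2+(δ:ℤ))^2
        + (2*((δ:ℤ)^2+(δ:ℤ))*(2*(δ:ℤ)-4)) * (∑ x ∈ Finset.Icc 1 δ, (x:ℤ))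
        + (2*(δ:ℤ)-4)^2 * (∑ x ∈ Finset.Icc 1 δ, (x:ℤ)^2) := by
    rw [← h4, hs, hsum]
  linear_combination 6*E + (6*((δ:ℤ)^2+(δ:ℤ))*(2*(δ:ℤ)-4))*(pow1 δ) + (2*(δ:ℤ)-4)^2*(pow2 δ)

lemma main_count (δ : ℕ) :
    12 * ((((T δ ×ˢ T δ).filter (fun q => (A δ q.1 ∩ A δ q.2).Nonempty)).card : ℤ))
      = ((δ:ℤ) - 1) * (δ:ℤ) * ((δ:ℤ) + 1) * (13 * (δ:ℤ)^2 - 7 * (δ:ℤ) - 10) := by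
  have hcp := count_plus δ
  have hD := D_eval δ
  rw [hD] at hcp
  have hcpz : ((((T δ ×ˢ T δ).filter (fun q => (A δ q.1 ∩ A δ q.2).Nonempty)).card : ℤ))
      + ((∑ y ∈ Finset.Icc 1 δ, (y - 1) * y ^ 2 : ℕ) : ℤ)
      = ∑ x ∈ Finset.Icc 1 δ, (((T δ).filter (fun t => x ∈ A δ t)).card : ℤ)^2 := by
    exact_mod_cast congrArg (Nat.cast : ℕ → ℤ) hcp
  have hDz : 12 * ((∑ y ∈ Finset.Icc 1 δ, (y - 1) * y ^ 2 : ℕ) : ℤ)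
      = 3*((δ:ℤ)*((δ:ℤ)+1))^2 - 2*((δ:ℤ)*((δ:ℤ)+1)*(2*(δ:ℤ)+1)) := by
    have hc : ((∑ y ∈ Finset.Icc 1 δ, (y - 1) * y ^ 2 : ℕ) : ℤ)
        = ∑ y ∈ Finset.Icc 1 δ, ((y:ℤ)^3 - (y:ℤ)^2) := by
      push_cast
      apply Finset.sum_congr rfl
      intro y hy
      rw [Finset.mem_Icc] at hy
      have : ((y - 1 : ℕ) : ℤ) = (y:ℤ) - 1 := by
        rw [Nat.cast_sub hy.1]; norm_num
      rw [this]
      ring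
    rw [hc, Finset.sum_sub_distrib]
    linear_combination 3*(pow3 δ) - 2*(pow2 δ)
  have hsf := sumf δ
  have goal2 : 24 * ((((T δ ×ˢ T δ).filter (fun q => (A δ q.1 ∩ A δ q.2).Nonempty)).card : ℤ))
      = 2 * (((δ:ℤ) - 1) * (δ:ℤ) * ((δ:ℤ) + 1) * (13 * (δ:ℤ)^2 - 7 * (δ:ℤ) - 10)) := by
    linear_combination 24*hcpz + hsf - 2*hDz
  linarith

def toTriple {n : ℕ} (v : Fin 4 → ZMod n) : ℕ × ℕ × ℕ := ((v 1).val, (v 2).val, (v 3).val)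

def ofTriple (n : ℕ) (t : ℕ × ℕ × ℕ) : Fin 4 → ZMod n :=
  ![0, (t.1 : ZMod n), (t.2.1 : ZMod n), (t.2.2 : ZMod n)]

section ZModPart

variable {n δ : ℕ}

lemma key {n : ℕ} [NeZero n] (a : ZMod n) : ((a.val : ℕ) : ZMod n) = a :=
  ZMod.natCast_rightInverse a

lemma cycle_iff (hn : n = 2*δ+1) (v : Fin 4 → ZMod n) :
    IsBasedCycleAtZero n 4 v ↔ v 0 = 0 ∧ toTriple v ∈ T δ := by
  have hnz : NeZero n := ⟨by omega⟩
  have hδ2 : (n-1)/2 = δ := by omega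
  constructor
  · rintro ⟨h0, hinj, harc⟩
    refine ⟨h0, ?_⟩
    have h1 := harc 0
    have h2 := harc 1
    have h3 := harc 2
    have h4 := harc 3
    rw [show (0:Fin 4)+1 = 1 from rfl] at h1
    rw [show (1:Fin 4)+1 = 2 from rfl] at h2
    rw [show (2:Fin 4)+1 = 3 from rfl] at h3
    rw [show (3:Fin 4)+1 = 0 from rfl] at h4
    simp only [rltAdj, Finset.mem_Icc, hδ2] at h1 h2 h3 h4
    set s0 := (v 1 - v 0).val with hs0
    set s1 := (v 2 - v 1).val with hs1
    set s2 := (v 3 - v 2).val with hs2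
    set s3 := (v 0 - v 3).val with hs3
    have e1 : ((s0 : ℕ) : ZMod n) = v 1 := by
      rw [hs0, key (v 1 - v 0), h0, sub_zero]
    have e2 : ((s0 + s1 : ℕ) : ZMod n) = v 2 := by
      push_cast
      rw [hs0, hs1, key, key, h0]
      ring
    have e3 : ((s0 + s1 + s2 : ℕ) : ZMod n) = v 3 := by
      push_cast
      rw [hs0, hs1, hs2, key, key, key, h0]
      ring
    have e4 : ((s0 + s1 + s2 + s3 : ℕ) : ZMod n) = 0 := by
      push_cast
      rw [hs0, hs1, hs2, hs3, key, key, key, key, h0]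
      ring
    have hdvd : n ∣ s0 + s1 + s2 + s3 := (ZMod.natCast_eq_zero_iff _ n).mp e4
    obtain ⟨k, hk⟩ := hdvd
    have hsum : s0 + s1 + s2 + s3 = n := by
      rcases k with _ | _ | k
      · simp at hk; omega
      · omega
      · exfalso
        have hge : n * 2 ≤ n * (k + 1 + 1) := Nat.mul_le_mul le_rfl (by omega)
        omega
    have hval1 : (v 1).val = s0 := by
      rw [← e1, ZMod.val_cast_of_lt (by omega)]
    have hval2 : (v 2).val = s0 + s1 := by
      rw [← e2, ZMod.val_cast_of_lt (by omega)]
    have hval3 : (v 3).val = s0 + s1 + s2 := by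
      rw [← e3, ZMod.val_cast_of_lt (by omega)]
    rw [mem_T]
    simp only [toTriple, hval1, hval2, hval3]
    omega
  · rintro ⟨h0, ht⟩
    rw [mem_T] at ht
    simp only [toTriple] at ht
    have hv0 : (v 0).val = 0 := by rw [h0]; exact ZMod.val_zero
    refine ⟨h0, ?_, ?_⟩
    · have d01 : v 0 ≠ v 1 := fun h => by have := congrArg ZMod.val h; omega
      have d02 : v 0 ≠ v 2 := fun h => by have := congrArg ZMod.val h; omega
      have d03 : v 0 ≠ v 3 := fun h => by have := congrArg ZMod.val h; omega
      have d12 : v 1 ≠ v 2 := fun h => by have := congrArg ZMod.val h; omega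
      have d13 : v 1 ≠ v 3 := fun h => by have := congrArg ZMod.val h; omega
      have d23 : v 2 ≠ v 3 := fun h => by have := congrArg ZMod.val h; omega
      intro i j hij
      fin_cases i <;> fin_cases j <;>
        first
          | rfl
          | (exact absurd hij (by
              first
                | exact d01 | exact d02 | exact d03
                | exact d12 | exact d13 | exact d23
                | exact Ne.symm d01 | exact Ne.symm d02 | exact Ne.symm d03
                | exact Ne.symm d12 | exact Ne.symm d13 | exact Ne.symm d23))
    · have hbn : (v 2).val < n := by omega
      have hcn : (v 3).val < n := by omega
      intro k
      fin_cases k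
      · show rltAdj n (v 0) (v 1)
        simp only [rltAdj, Finset.mem_Icc, hδ2, h0, sub_zero]
        omega
      · show rltAdj n (v 1) (v 2)
        have : v 2 - v 1 = (((v 2).val - (v 1).val : ℕ) : ZMod n) := by
          rw [Nat.cast_sub (by omega), key, key]
        simp only [rltAdj, Finset.mem_Icc, hδ2, this, ZMod.val_cast_of_lt (show (v 2).val - (v 1).val < n by omega)]
        omega
      · show rltAdj n (v 2) (v 3)
        have : v 3 - v 2 = (((v 3).val - (v 2).val : ℕ) : ZMod n) := by
          rw [Nat.cast_sub (by omega), key, key]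
        simp only [rltAdj, Finset.mem_Icc, hδ2, this, ZMod.val_cast_of_lt (show (v 3).val - (v 2).val < n by omega)]
        omega
      · show rltAdj n (v 3) (v 0)
        have : v 0 - v 3 = (((n - (v 3).val : ℕ) : ℕ) : ZMod n) := by
          rw [Nat.cast_sub (by omega), key, ZMod.natCast_self, h0]
        simp only [rltAdj, Finset.mem_Icc, hδ2, this, ZMod.val_cast_of_lt (show n - (v 3).val < n by omega)]
        omega

lemma toTriple_ofTriple (hn : n = 2*δ+1) {t : ℕ × ℕ × ℕ} (ht : t ∈ T δ) :
    toTriple (ofTriple n t) = t := by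
  have hnz : NeZero n := ⟨by omega⟩
  rw [mem_T] at ht
  simp only [toTriple, ofTriple]
  show (((t.1 : ZMod n)).val, ((t.2.1 : ZMod n)).val, ((t.2.2 : ZMod n)).val) = t
  rw [ZMod.val_cast_of_lt (by omega), ZMod.val_cast_of_lt (by omega),
    ZMod.val_cast_of_lt (by omega)]

lemma cycle_ofTriple (hn : n = 2*δ+1) {t : ℕ × ℕ × ℕ} (ht : t ∈ T δ) :
    IsBasedCycleAtZero n 4 (ofTriple n t) :=
  (cycle_iff hn _).mpr ⟨rfl, by rw [toTriple_ofTriple hn ht]; exact ht⟩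

lemma mem_A_iff (hn : n = 2*δ+1) {v : Fin 4 → ZMod n} (hv : IsBasedCycleAtZero n 4 v)
    (x : ZMod n) :
    (rltAdj n 0 x ∧ x ∈ Set.range v) ↔ x.val ∈ A δ (toTriple v) := by
  have hnz : NeZero n := ⟨by omega⟩
  have hδ2 : (n-1)/2 = δ := by omega
  obtain ⟨h0, ht⟩ := (cycle_iff hn v).mp hv
  have hv0 : (v 0).val = 0 := by rw [h0]; exact ZMod.val_zero
  rw [mem_T] at ht
  simp only [toTriple] at ht ⊢
  rw [mem_A_iff']
  simp only [rltAdj, Finset.mem_Icc, sub_zero]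
  rw [hδ2]
  constructor
  · rintro ⟨⟨hx1, hx2⟩, i, rfl⟩
    have hcases : v i = v 0 ∨ v i = v 1 ∨ v i = v 2 ∨ v i = v 3 := by
      fin_cases i
      · exact Or.inl rfl
      · exact Or.inr (Or.inl rfl)
      · exact Or.inr (Or.inr (Or.inl rfl))
      · exact Or.inr (Or.inr (Or.inr rfl))
    rcases hcases with h | h | h | h <;> rw [h] at hx1 hx2 ⊢ <;> omega
  · intro h
    have hxv : ∀ m : Fin 4, (v m).val = x.val → v m = x := by
      intro m hm
      exact ZMod.val_injective n hm
    rcases h with h | ⟨hb, h⟩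
    · exact ⟨⟨by omega, by omega⟩, 1, hxv 1 h⟩
    · exact ⟨⟨by omega, by omega⟩, 2, hxv 2 h⟩

lemma card_key (hn : n = 2*δ+1) :
    Nat.card {p : (Fin 4 → ZMod n) × (Fin 4 → ZMod n) //
        IsBasedCycleAtZero n 4 p.1 ∧ IsBasedCycleAtZero n 4 p.2 ∧
        ∃ x : ZMod n, rltAdj n 0 x ∧ x ∈ Set.range p.1 ∧ x ∈ Set.range p.2}
      = ((T δ ×ˢ T δ).filter (fun q => (A δ q.1 ∩ A δ q.2).Nonempty)).card := by
  have hnz : NeZero n := ⟨by omega⟩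
  rw [← Nat.card_eq_finsetCard]
  apply Nat.card_congr
  have cycle_ext : ∀ (v w : Fin 4 → ZMod n), IsBasedCycleAtZero n 4 v →
      IsBasedCycleAtZero n 4 w → toTriple v = toTriple w → v = w := by
    intro v w hv hw h
    have h1 : (v 1).val = (w 1).val := congrArg (fun t => t.1) h
    have h2 : (v 2).val = (w 2).val := congrArg (fun t => t.2.1) h
    have h3 : (v 3).val = (w 3).val := congrArg (fun t => t.2.2) h
    funext i
    fin_cases i
    · exact hv.1.trans hw.1.symm
    · exact ZMod.val_injective n h1
    · exact ZMod.val_injective n h2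
    · exact ZMod.val_injective n h3
  refine Equiv.ofBijective (fun p => ⟨(toTriple p.1.1, toTriple p.1.2), ?_⟩) ⟨?_, ?_⟩
  · obtain ⟨hc1, hc2, hsh⟩ := p.2
    rw [Finset.mem_filter, Finset.mem_product]
    refine ⟨⟨((cycle_iff hn _).mp hc1).2, ((cycle_iff hn _).mp hc2).2⟩, ?_⟩
    obtain ⟨x, hx, hr1, hr2⟩ := hsh
    exact ⟨x.val, Finset.mem_inter.mpr ⟨(mem_A_iff hn hc1 x).mp ⟨hx, hr1⟩,
      (mem_A_iff hn hc2 x).mp ⟨hx, hr2⟩⟩⟩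
  · rintro ⟨⟨v, w⟩, hv, hw, hsh⟩ ⟨⟨v', w'⟩, hv', hw', hsh'⟩ h
    simp only [Subtype.mk.injEq, Prod.mk.injEq] at h
    have := cycle_ext v v' hv hv' h.1
    have := cycle_ext w w' hw hw' h.2
    apply Subtype.ext
    simp only [Prod.mk.injEq]
    exact ⟨‹v = v'›, ‹w = w'›⟩
  · rintro ⟨⟨t1, t2⟩, hq⟩
    rw [Finset.mem_filter, Finset.mem_product] at hq
    obtain ⟨⟨ht1, ht2⟩, y, hy⟩ := hq
    rw [Finset.mem_inter] at hy
    have hy1 : y ∈ Finset.Icc 1 δ := A_sub ht1 hy.1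
    rw [Finset.mem_Icc] at hy1
    have hyval : ((y : ZMod n)).val = y := ZMod.val_cast_of_lt (by omega)
    refine ⟨⟨(ofTriple n t1, ofTriple n t2), cycle_ofTriple hn ht1, cycle_ofTriple hn ht2,
      (y : ZMod n), ?_, ?_⟩, ?_⟩
    · have := (mem_A_iff hn (cycle_ofTriple hn ht1) (y : ZMod n))
      rw [toTriple_ofTriple hn ht1, hyval] at this
      exact (this.mpr hy.1).1
    · constructor
      · have := (mem_A_iff hn (cycle_ofTriple hn ht1) (y : ZMod n))
        rw [toTriple_ofTriple hn ht1, hyval] at this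
        exact (this.mpr hy.1).2
      · have := (mem_A_iff hn (cycle_ofTriple hn ht2) (y : ZMod n))
        rw [toTriple_ofTriple hn ht2, hyval] at this
        exact (this.mpr hy.2).2
    · apply Subtype.ext
      simp only [Prod.mk.injEq]
      exact ⟨toTriple_ofTriple hn ht1, toTriple_ofTriple hn ht2⟩

end ZModPart

end RLTpf

/-- Pairs of 4-cycles through 0 having a common vertex in the out-set `N⁺(0)` of 0. -/
theorem pairs_four_cycles_sharing_outneighbor_of_RLT
    (n : ℕ) (hodd : Odd n) (hn : 1 ≤ n) (δ : ℕ) (hδ : δ = (n - 1) / 2) :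
    12 * (Nat.card {p : (Fin 4 → ZMod n) × (Fin 4 → ZMod n) //
        IsBasedCycleAtZero n 4 p.1 ∧ IsBasedCycleAtZero n 4 p.2 ∧
        ∃ x : ZMod n, rltAdj n 0 x ∧ x ∈ Set.range p.1 ∧ x ∈ Set.range p.2} : ℤ)
      = ((δ : ℤ) - 1) * (δ : ℤ) * ((δ : ℤ) + 1) *
          (13 * (δ : ℤ) ^ 2 - 7 * (δ : ℤ) - 10) := by
  obtain ⟨k, hk⟩ := hodd
  have hn2 : n = 2 * δ + 1 := by omega
  rw [RLTpf.card_key hn2]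
  exact RLTpf.main_count δ
end
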